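/- arXiv:2107.01336 — 4 statements merged into one kernel-verified Lean document; each statement's English description precedes it below -/
import Mathlib

section
/- Let T be a bounded linear operator on H admitting an A-adjoint T♯. Then w_A(T) ≥ ‖T‖_A/2 + |‖Re_A(T)‖_A − ‖Im_A(T)‖_A|/2. -/
noncomputable section

open Complex ContinuousLinearMap

variable {H : Type*} [NormedAddCommGroup H] [InnerProductSpace ℂ H] [CompleteSpace H]

/-- The `A`-inner ℂ product `⟨x, y⟩_A = ⟨A x, y⟩`. -/
def innA (A : H →L[ℂ] H) (x y : H) : ℂ := @inner ℂ _ _ (A x) y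

/-- The `A`-seminorm `‖x‖_A = √⟨A x, x⟩`. -/
def vnormA (A : H →L[ℂ] H) (x : H) : ℝ := Real.sqrt (innA A x x).re

/-- The `A`-operator seminorm `‖T‖_A = sup {‖T x‖_A : ‖x‖_A = 1}`. -/
def opnormA (A T : H →L[ℂ] H) : ℝ :=
  sSup {r : ℝ | ∃ x : H, vnormA A x = 1 ∧ r = vnormA A (T x)}

/-- The `A`-numerical radius `w_A(T) = sup {|⟨T x, x⟩_A| : ‖x‖_A = 1}`. -/
def wA (A T : H →L[ℂ] H) : ℝ :=
  sSup {r : ℝ | ∃ x : H, vnormA A x = 1 ∧ r = ‖innA A (T x) x‖}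

/-- The `A`-numerical range `W_A(T) = {⟨T x, x⟩_A : ‖x‖_A = 1}`. -/
def WA (A T : H →L[ℂ] H) : Set ℂ :=
  {z : ℂ | ∃ x : H, vnormA A x = 1 ∧ z = innA A (T x) x}

/-- `Re_A(T) = (T + T♯)/2`, given an `A`-adjoint `Ts` of `T`. -/
def ReA (T Ts : H →L[ℂ] H) : H →L[ℂ] H := (2 : ℂ)⁻¹ • (T + Ts)

/-- `Im_A(T) = (T - T♯)/(2i)`, given an `A`-adjoint `Ts` of `T`. -/
def ImA (T Ts : H →L[ℂ] H) : H →L[ℂ] H := (2 * Complex.I)⁻¹ • (T - Ts)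

/-- `Ts` is an `A`-adjoint of `T`, i.e. `A ∘ Ts = T* ∘ A`. -/
def IsAAdjoint (A T Ts : H →L[ℂ] H) : Prop :=
  A.comp Ts = (ContinuousLinearMap.adjoint T).comp A

set_option linter.unusedSectionVars false
set_option linter.unusedVariables false

variable {A : H →L[ℂ] H}

lemma A_sa (hA : A.IsPositive) (x y : H) : (inner ℂ (A x) y : ℂ) = inner ℂ x (A y) := by
  rw [← ContinuousLinearMap.adjoint_inner_left]
  rw [ContinuousLinearMap.isSelfAdjoint_iff'.mp hA.isSelfAdjoint]

lemma innA_conj (hA : A.IsPositive) (x y : H) :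
    (starRingEnd ℂ) (innA A y x) = innA A x y := by
  rw [innA, innA, inner_conj_symm, A_sa hA]

lemma innA_re_nonneg (hA : A.IsPositive) (x : H) : 0 ≤ (innA A x x).re := hA.2 x

/-- the pre-inner-product core given by a positive operator. -/
def aCore (hA : A.IsPositive) : PreInnerProductSpace.Core ℂ H where
  inner x y := innA A x y
  conj_inner_symm x y := innA_conj hA x y
  re_inner_nonneg x := hA.2 x
  add_left x y z := by simp [innA, inner_add_left]
  smul_left x y r := by simp [innA, inner_smul_left, mul_comm]

lemma innA_abs_le (hA : A.IsPositive) (x y : H) :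
    ‖innA A x y‖ ≤ vnormA A x * vnormA A y := by
  have h := @InnerProductSpace.Core.inner_mul_inner_self_le ℂ H _ _ _ (aCore hA) x y
  have hsymm : ‖(aCore hA).inner y x‖ = ‖(aCore hA).inner x y‖ := by
    show ‖innA A y x‖ = ‖innA A x y‖
    rw [← innA_conj hA x y]; simp
  rw [hsymm] at h
  have h2 : ‖innA A x y‖ ^ 2 ≤ (innA A x x).re * (innA A y y).re := by
    rw [sq]; exact h
  rw [vnormA, vnormA, ← Real.sqrt_mul (innA_re_nonneg hA x)]
  rw [← Real.sqrt_sq (norm_nonneg (innA A x y))]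
  exact Real.sqrt_le_sqrt h2

lemma vnormA_nonneg (x : H) : 0 ≤ vnormA A x := Real.sqrt_nonneg _

lemma vnormA_sq (hA : A.IsPositive) (x : H) : vnormA A x ^ 2 = (innA A x x).re := by
  rw [vnormA, Real.sq_sqrt (innA_re_nonneg hA x)]

lemma innA_self_real (hA : A.IsPositive) (x : H) :
    innA A x x = ((innA A x x).re : ℂ) := by
  have := innA_conj hA x x
  exact (Complex.conj_eq_iff_re.mp this).symm

lemma vnormA_smul (hA : A.IsPositive) (c : ℂ) (x : H) :
    vnormA A (c • x) = ‖c‖ * vnormA A x := by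
  have h : innA A (c • x) (c • x) = ((‖c‖ ^ 2 : ℝ) : ℂ) * innA A x x := by
    simp only [innA, map_smul, inner_smul_left, inner_smul_right]
    rw [← mul_assoc, Complex.mul_conj']
    norm_cast
  rw [vnormA, h, Complex.re_ofReal_mul, Real.sqrt_mul (by positivity),
    Real.sqrt_sq (norm_nonneg c)]
  rfl

lemma vnormA_add_le (hA : A.IsPositive) (x y : H) :
    vnormA A (x + y) ≤ vnormA A x + vnormA A y := by
  have hexp : (innA A (x + y) (x + y)).re
      = (innA A x x).re + 2 * (innA A x y).re + (innA A y y).re := by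
    simp only [innA, map_add, inner_add_left, inner_add_right]
    have : (inner ℂ (A y) x : ℂ) = (starRingEnd ℂ) (inner ℂ (A x) y) := (innA_conj hA y x).symm
    rw [this]
    simp only [Complex.add_re, Complex.conj_re]
    ring
  have hre : (innA A x y).re ≤ vnormA A x * vnormA A y :=
    le_trans (Complex.re_le_norm _) (innA_abs_le hA x y)
  have h2 : (innA A (x + y) (x + y)).re ≤ (vnormA A x + vnormA A y) ^ 2 := by
    rw [hexp]
    have hx := vnormA_sq hA x; have hy := vnormA_sq hA y
    nlinarith [vnormA_nonneg (A := A) x, vnormA_nonneg (A := A) y, hre]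
  rw [vnormA]
  calc Real.sqrt (innA A (x + y) (x + y)).re ≤ Real.sqrt ((vnormA A x + vnormA A y) ^ 2) :=
        Real.sqrt_le_sqrt h2
    _ = vnormA A x + vnormA A y := Real.sqrt_sq (add_nonneg (vnormA_nonneg x) (vnormA_nonneg y))

lemma apply_eq_zero_of_vnormA_eq_zero (hA : A.IsPositive) {x : H} (hx : vnormA A x = 0) :
    A x = 0 := by
  have h : ∀ y : H, innA A x y = 0 := fun y => by
    have := innA_abs_le hA x y
    rw [hx, zero_mul] at this
    exact norm_eq_zero.mp (le_antisymm this (norm_nonneg _))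
  have := h (A x)
  rw [innA] at this
  exact inner_self_eq_zero.mp this

lemma vnormA_le_norm (hA : A.IsPositive) (x : H) :
    vnormA A x ≤ Real.sqrt ‖A‖ * ‖x‖ := by
  have h1 : (innA A x x).re ≤ ‖A‖ * ‖x‖ ^ 2 := by
    calc (innA A x x).re ≤ ‖innA A x x‖ := Complex.re_le_norm _
      _ = ‖(inner ℂ (A x) x : ℂ)‖ := by rw [innA]
      _ ≤ ‖A x‖ * ‖x‖ := norm_inner_le_norm _ _
      _ ≤ ‖A‖ * ‖x‖ * ‖x‖ := by
          gcongr; exact A.le_opNorm x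
      _ = ‖A‖ * ‖x‖ ^ 2 := by ring
  calc vnormA A x = Real.sqrt (innA A x x).re := rfl
    _ ≤ Real.sqrt (‖A‖ * ‖x‖ ^ 2) := Real.sqrt_le_sqrt h1
    _ = Real.sqrt ‖A‖ * ‖x‖ := by
        rw [Real.sqrt_mul (norm_nonneg A), Real.sqrt_sq (norm_nonneg x)]

variable {T Ts : H →L[ℂ] H}

lemma innA_adj (hA : A.IsPositive) (hTs : IsAAdjoint A T Ts) (x y : H) :
    innA A (T x) y = innA A x (Ts y) := by
  have hpt : A (Ts y) = ContinuousLinearMap.adjoint T (A y) := by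
    have := congrArg (fun (f : H →L[ℂ] H) => f y) hTs
    simpa using this
  rw [innA, innA, A_sa hA x (Ts y), hpt, ContinuousLinearMap.adjoint_inner_right,
    ← A_sa hA (T x) y]

lemma innA_adj' (hA : A.IsPositive) (hTs : IsAAdjoint A T Ts) (x y : H) :
    innA A (Ts x) y = innA A x (T y) := by
  rw [← innA_conj hA, ← innA_adj hA hTs y x, innA_conj hA]

lemma isAAdjoint_of_forall (hA : A.IsPositive) {S Sd : H →L[ℂ] H}
    (h : ∀ x y : H, innA A (S x) y = innA A x (Sd y)) : IsAAdjoint A S Sd := by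
  unfold IsAAdjoint
  ext y
  simp only [ContinuousLinearMap.comp_apply]
  refine ext_inner_left ℂ (fun v => ?_)
  rw [ContinuousLinearMap.adjoint_inner_right]
  calc (inner ℂ v (A (Sd y)) : ℂ) = inner ℂ (A v) (Sd y) := (A_sa hA v (Sd y)).symm
    _ = innA A v (Sd y) := rfl
    _ = innA A (S v) y := (h v y).symm
    _ = inner ℂ (S v) (A y) := A_sa hA (S v) y

lemma reA_selfadj (hA : A.IsPositive) (hTs : IsAAdjoint A T Ts) :
    IsAAdjoint A (ReA T Ts) (ReA T Ts) := by
  refine isAAdjoint_of_forall hA (fun x y => ?_)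
  have h1 : (ReA T Ts) x = (2 : ℂ)⁻¹ • (T x + Ts x) := by simp [ReA]
  have h2 : (ReA T Ts) y = (2 : ℂ)⁻¹ • (T y + Ts y) := by simp [ReA]
  simp only [innA, h1, h2, inner_smul_left, inner_smul_right, inner_add_left, inner_add_right,
    map_smul, map_add]
  rw [show ((starRingEnd ℂ) (2 : ℂ)⁻¹) = (2 : ℂ)⁻¹ by simp [Complex.ext_iff]]
  congr 1
  have e1 : (inner ℂ (A (T x)) y : ℂ) = inner ℂ (A x) (Ts y) := innA_adj hA hTs x y
  have e2 : (inner ℂ (A (Ts x)) y : ℂ) = inner ℂ (A x) (T y) := innA_adj' hA hTs x y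
  rw [e1, e2]; ring

lemma imA_selfadj (hA : A.IsPositive) (hTs : IsAAdjoint A T Ts) :
    IsAAdjoint A (ImA T Ts) (ImA T Ts) := by
  refine isAAdjoint_of_forall hA (fun x y => ?_)
  have h1 : (ImA T Ts) x = (2 * Complex.I)⁻¹ • (T x - Ts x) := by simp [ImA]
  have h2 : (ImA T Ts) y = (2 * Complex.I)⁻¹ • (T y - Ts y) := by simp [ImA]
  simp only [innA, h1, h2, inner_smul_left, inner_smul_right, inner_sub_left, inner_sub_right,
    map_smul, map_sub]
  have hc : ((starRingEnd ℂ) ((2 * Complex.I)⁻¹)) = -(2 * Complex.I)⁻¹ := by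
    rw [map_inv₀]
    rw [show (starRingEnd ℂ) (2 * Complex.I) = -(2 * Complex.I) by simp [Complex.ext_iff]]
    rw [inv_neg]
  rw [hc]
  have e1 : (inner ℂ (A (T x)) y : ℂ) = inner ℂ (A x) (Ts y) := innA_adj hA hTs x y
  have e2 : (inner ℂ (A (Ts x)) y : ℂ) = inner ℂ (A x) (T y) := innA_adj' hA hTs x y
  rw [e1, e2]; ring

lemma TsT_selfadj (hA : A.IsPositive) (hTs : IsAAdjoint A T Ts) :
    IsAAdjoint A (Ts.comp T) (Ts.comp T) := by
  refine isAAdjoint_of_forall hA (fun x y => ?_)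
  simp only [ContinuousLinearMap.comp_apply]
  rw [innA_adj' hA hTs (T x) y, innA_adj hA hTs x (T y)]

lemma innA_iter (hA : A.IsPositive) {S : H →L[ℂ] H} (hS : IsAAdjoint A S S) :
    ∀ (k : ℕ) (a b : H), innA A (S^[k] a) b = innA A a (S^[k] b) := by
  intro k
  induction k with
  | zero => intro a b; simp
  | succ n ih =>
    intro a b
    rw [Function.iterate_succ_apply, Function.iterate_succ_apply']
    rw [ih (S a) b, ← innA_adj hA hS a (S^[n] b)]

lemma norm_iterate_le (S : H →L[ℂ] H) (k : ℕ) (x : H) : ‖S^[k] x‖ ≤ ‖S‖ ^ k * ‖x‖ := by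
  induction k with
  | zero => simp
  | succ n ih =>
    rw [Function.iterate_succ_apply']
    calc ‖S (S^[n] x)‖ ≤ ‖S‖ * ‖S^[n] x‖ := S.le_opNorm _
      _ ≤ ‖S‖ * (‖S‖ ^ n * ‖x‖) := by gcongr
      _ = ‖S‖ ^ (n + 1) * ‖x‖ := by ring

lemma vnormA_iter_sq (hA : A.IsPositive) {S : H →L[ℂ] H} (hS : IsAAdjoint A S S)
    (j : ℕ) (x : H) :
    vnormA A (S^[j] x) ^ 2 ≤ vnormA A x * vnormA A (S^[j + j] x) := by
  have h1 : innA A (S^[j] x) (S^[j] x) = innA A x (S^[j + j] x) := by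
    rw [innA_iter hA hS j x (S^[j] x), ← Function.iterate_add_apply]
  calc vnormA A (S^[j] x) ^ 2 = (innA A (S^[j] x) (S^[j] x)).re := vnormA_sq hA _
    _ ≤ ‖innA A (S^[j] x) (S^[j] x)‖ := Complex.re_le_norm _
    _ = ‖innA A x (S^[j + j] x)‖ := by rw [h1]
    _ ≤ vnormA A x * vnormA A (S^[j + j] x) := innA_abs_le hA _ _

lemma vnormA_apply_le_selfadj (hA : A.IsPositive) {S : H →L[ℂ] H}
    (hS : IsAAdjoint A S S) (x : H) : vnormA A (S x) ≤ ‖S‖ * vnormA A x := by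
  by_cases hv : vnormA A x = 0
  · have hAx : A x = 0 := apply_eq_zero_of_vnormA_eq_zero hA hv
    have h0 : innA A (S x) (S x) = 0 := by
      rw [innA_adj hA hS x (S x), innA, hAx, inner_zero_left]
    have : vnormA A (S x) = 0 := by rw [vnormA, h0]; simp
    rw [this, hv, mul_zero]
  · have hv' : 0 < vnormA A x := lt_of_le_of_ne (vnormA_nonneg x) (Ne.symm hv)
    set v := vnormA A x with hvdef
    set a := vnormA A (S x) with hadef
    by_contra hcon
    push_neg at hcon
    have hb0 : 0 ≤ ‖S‖ * v := mul_nonneg (norm_nonneg S) hv'.le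
    have ha0 : 0 < a := lt_of_le_of_lt hb0 hcon
    -- main induction
    have claim : ∀ n : ℕ, a ^ (2 ^ n) * v ≤ vnormA A (S^[2 ^ n] x) * v ^ (2 ^ n) := by
      intro n
      induction n with
      | zero => simp [hadef]
      | succ n ih =>
        have hfnn : 0 ≤ vnormA A (S^[2 ^ n] x) * v ^ (2 ^ n) :=
          mul_nonneg (vnormA_nonneg _) (pow_nonneg hv'.le _)
        have hsq : (a ^ (2 ^ n) * v) ^ 2 ≤ (vnormA A (S^[2 ^ n] x) * v ^ (2 ^ n)) ^ 2 := by
          apply pow_le_pow_left₀ (mul_nonneg (pow_nonneg ha0.le _) hv'.le) ih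
        have hkey := vnormA_iter_sq hA hS (2 ^ n) x
        have h2p : (2 : ℕ) ^ n + 2 ^ n = 2 ^ (n + 1) := by rw [pow_succ]; ring
        rw [h2p] at hkey
        have hstep : (a ^ (2 ^ n) * v) ^ 2 ≤ v * vnormA A (S^[2 ^ (n + 1)] x) * (v ^ (2 ^ n)) ^ 2 := by
          calc (a ^ (2 ^ n) * v) ^ 2 ≤ (vnormA A (S^[2 ^ n] x) * v ^ (2 ^ n)) ^ 2 := hsq
            _ = vnormA A (S^[2 ^ n] x) ^ 2 * (v ^ (2 ^ n)) ^ 2 := by ring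
            _ ≤ (v * vnormA A (S^[2 ^ (n + 1)] x)) * (v ^ (2 ^ n)) ^ 2 := by
                gcongr
        have hpp : (2 : ℕ) ^ n * 2 = 2 ^ (n + 1) := by rw [pow_succ]
        have hexp : (a ^ (2 ^ n) * v) ^ 2 = a ^ (2 ^ (n + 1)) * v * v := by
          rw [mul_pow, ← pow_mul, hpp]; ring
        have hexp2 : v * vnormA A (S^[2 ^ (n + 1)] x) * (v ^ (2 ^ n)) ^ 2
            = vnormA A (S^[2 ^ (n + 1)] x) * v ^ (2 ^ (n + 1)) * v := by
          rw [← pow_mul, hpp]; ring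
        rw [hexp, hexp2] at hstep
        exact le_of_mul_le_mul_right hstep hv'
    -- bound on the RHS
    have hK : ∀ n : ℕ, vnormA A (S^[2 ^ n] x) ≤ Real.sqrt ‖A‖ * ‖x‖ * ‖S‖ ^ (2 ^ n) := by
      intro n
      calc vnormA A (S^[2 ^ n] x) ≤ Real.sqrt ‖A‖ * ‖S^[2 ^ n] x‖ := vnormA_le_norm hA _
        _ ≤ Real.sqrt ‖A‖ * (‖S‖ ^ (2 ^ n) * ‖x‖) :=
            mul_le_mul_of_nonneg_left (norm_iterate_le S _ x) (Real.sqrt_nonneg _)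
        _ = Real.sqrt ‖A‖ * ‖x‖ * ‖S‖ ^ (2 ^ n) := by ring
    have hS0 : 0 < ‖S‖ := by
      rcases (norm_nonneg S).lt_or_eq with h | h
      · exact h
      · exfalso
        have : S = 0 := by rwa [eq_comm, norm_eq_zero] at h
        rw [this] at hadef
        simp only [ContinuousLinearMap.zero_apply] at hadef
        have : a = 0 := by rw [hadef, vnormA]; simp [innA]
        linarith
    set b := ‖S‖ * v with hbdef
    have hb : 0 < b := mul_pos hS0 hv'
    set K := Real.sqrt ‖A‖ * ‖x‖ with hKdef
    have hmain : ∀ n : ℕ, a ^ (2 ^ n) * v ≤ K * b ^ (2 ^ n) := by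
      intro n
      calc a ^ (2 ^ n) * v ≤ vnormA A (S^[2 ^ n] x) * v ^ (2 ^ n) := claim n
        _ ≤ (K * ‖S‖ ^ (2 ^ n)) * v ^ (2 ^ n) :=
            mul_le_mul_of_nonneg_right (hK n) (pow_nonneg hv'.le _)
        _ = K * b ^ (2 ^ n) := by rw [hbdef, mul_pow]; ring
    have hr1 : 1 < a / b := (one_lt_div hb).mpr hcon
    obtain ⟨n, hn⟩ := pow_unbounded_of_one_lt (K / v) hr1
    have h2 : (a / b) ^ n ≤ (a / b) ^ (2 ^ n) :=
      pow_le_pow_right₀ hr1.le (Nat.lt_two_pow_self (n := n)).le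
    have h3 : (a / b) ^ (2 ^ n) ≤ K / v := by
      rw [div_pow, div_le_div_iff₀ (pow_pos hb _) hv']
      exact hmain n
    linarith

lemma innA_re_add (hA : A.IsPositive) (x y : H) :
    (innA A (x + y) (x + y)).re
      = (innA A x x).re + 2 * (innA A x y).re + (innA A y y).re := by
  simp only [innA, map_add, inner_add_left, inner_add_right]
  have h : (inner ℂ (A y) x : ℂ) = (starRingEnd ℂ) (inner ℂ (A x) y) := (innA_conj hA y x).symm
  rw [h]
  simp only [Complex.add_re, Complex.conj_re]
  ring

lemma innA_re_sub (hA : A.IsPositive) (x y : H) :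
    (innA A (x - y) (x - y)).re
      = (innA A x x).re - 2 * (innA A x y).re + (innA A y y).re := by
  have := innA_re_add hA x (-y)
  rw [← sub_eq_add_neg] at this
  rw [this]
  simp only [innA, map_neg, inner_neg_left, inner_neg_right, neg_neg, Complex.neg_re]
  ring

lemma vnormA_normalize (hA : A.IsPositive) {u : H} (hu : vnormA A u ≠ 0) :
    vnormA A ((((vnormA A u)⁻¹ : ℝ) : ℂ) • u) = 1 := by
  rw [vnormA_smul hA]
  rw [Complex.norm_real, Real.norm_of_nonneg (inv_nonneg.mpr (vnormA_nonneg u))]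
  exact inv_mul_cancel₀ hu

lemma selfadj_vnorm_le_w (hA : A.IsPositive) {S : H →L[ℂ] H} (hSsa : IsAAdjoint A S S)
    {w : ℝ} (hw0 : 0 ≤ w)
    (hquad : ∀ u : H, ‖innA A (S u) u‖ ≤ w * vnormA A u ^ 2)
    (x : H) (hx : vnormA A x = 1) : vnormA A (S x) ≤ w := by
  by_cases h0 : vnormA A (S x) = 0
  · rw [h0]; exact hw0
  · set V := vnormA A (S x) with hV
    set c : ℝ := V⁻¹ with hc
    set y : H := ((c : ℝ) : ℂ) • S x with hy
    have hyn : vnormA A y = 1 := vnormA_normalize hA h0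
    have hVpos : 0 < V := lt_of_le_of_ne (vnormA_nonneg _) (Ne.symm h0)
    -- re of innA (S x) y equals V
    have hq : (innA A (S x) y).re = V := by
      have h1 : innA A (S x) y = ((c : ℝ) : ℂ) * innA A (S x) (S x) := by
        rw [hy, innA, innA, inner_smul_right]
      rw [h1, innA_self_real hA (S x), ← Complex.ofReal_mul]
      rw [Complex.ofReal_re, ← vnormA_sq hA]
      rw [hc, ← hV]
      field_simp
    -- polarization
    have hconjq : innA A (S y) x = (starRingEnd ℂ) (innA A (S x) y) := by
      have h1 : innA A (S y) x = innA A y (S x) := innA_adj hA hSsa y x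
      rw [h1, ← innA_conj hA y (S x)]
    have hpol : (innA A (S (x + y)) (x + y)).re - (innA A (S (x - y)) (x - y)).re
        = 4 * (innA A (S x) y).re := by
      have e1 : innA A (S (x + y)) (x + y)
          = innA A (S x) x + innA A (S x) y + innA A (S y) x + innA A (S y) y := by
        simp only [innA, map_add, inner_add_left, inner_add_right]; ring
      have e2 : innA A (S (x - y)) (x - y)
          = innA A (S x) x - innA A (S x) y - innA A (S y) x + innA A (S y) y := by
        simp only [innA, map_sub, inner_sub_left, inner_sub_right]; ring
      rw [e1, e2, hconjq]
      simp only [Complex.add_re, Complex.sub_re, Complex.conj_re]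
      ring
    -- parallelogram
    have hpar : vnormA A (x + y) ^ 2 + vnormA A (x - y) ^ 2 = 4 := by
      rw [vnormA_sq hA, vnormA_sq hA, innA_re_add hA x y, innA_re_sub hA x y]
      have h1 : (innA A x x).re = 1 := by rw [← vnormA_sq hA, hx]; norm_num
      have h2 : (innA A y y).re = 1 := by rw [← vnormA_sq hA, hyn]; norm_num
      rw [h1, h2]; ring
    -- bounds
    have hb1 : (innA A (S (x + y)) (x + y)).re ≤ w * vnormA A (x + y) ^ 2 :=
      le_trans (Complex.re_le_norm _) (hquad (x + y))
    have hb2 : -(innA A (S (x - y)) (x - y)).re ≤ w * vnormA A (x - y) ^ 2 := by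
      refine le_trans ?_ (hquad (x - y))
      rw [← Complex.neg_re]
      calc (-(innA A (S (x - y)) (x - y))).re ≤ ‖-(innA A (S (x - y)) (x - y))‖ :=
            Complex.re_le_norm _
        _ = ‖innA A (S (x - y)) (x - y)‖ := norm_neg _
    have : 4 * V ≤ 4 * w := by
      rw [← hq, ← hpol]
      have := hpar
      nlinarith [hb1, hb2]
    linarith

lemma quad_bound (hA : A.IsPositive) {w : ℝ}
    (hw : ∀ x : H, vnormA A x = 1 → ‖innA A (T x) x‖ ≤ w) :
    ∀ u : H, ‖innA A (T u) u‖ ≤ w * vnormA A u ^ 2 := by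
  intro u
  by_cases hu : vnormA A u = 0
  · have hAu : A u = 0 := apply_eq_zero_of_vnormA_eq_zero hA hu
    have h0 : innA A (T u) u = 0 := by
      rw [innA, A_sa hA, hAu, inner_zero_right]
    rw [h0, hu]; simp
  · set c : ℝ := (vnormA A u)⁻¹ with hc
    have he : vnormA A ((c : ℂ) • u) = 1 := vnormA_normalize hA hu
    have hmem := hw _ he
    have hcomp : innA A (T ((c : ℂ) • u)) ((c : ℂ) • u)
        = ((c ^ 2 : ℝ) : ℂ) * innA A (T u) u := by
      rw [map_smul, innA, innA, map_smul, inner_smul_left, inner_smul_right,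
        Complex.conj_ofReal]
      push_cast
      ring
    have hmem' : c ^ 2 * ‖innA A (T u) u‖ ≤ w := by
      rwa [hcomp, norm_mul, Complex.norm_real, Real.norm_of_nonneg (sq_nonneg c)] at hmem
    have hc2 : c ^ 2 * vnormA A u ^ 2 = 1 := by
      rw [hc]; field_simp
    have e : c ^ 2 * ‖innA A (T u) u‖ * vnormA A u ^ 2
        = ‖innA A (T u) u‖ := by
      rw [mul_right_comm, hc2, one_mul]
    have := mul_le_mul_of_nonneg_right hmem' (sq_nonneg (vnormA A u))
    rw [e] at this
    calc ‖innA A (T u) u‖ ≤ w * vnormA A u ^ 2 := this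

lemma reA_inner (hA : A.IsPositive) (hTs : IsAAdjoint A T Ts) (x : H) :
    innA A ((ReA T Ts) x) x = (((innA A (T x) x).re : ℝ) : ℂ) := by
  have h1 : (ReA T Ts) x = (2 : ℂ)⁻¹ • (T x + Ts x) := by simp [ReA]
  have h2 : innA A (Ts x) x = (starRingEnd ℂ) (innA A (T x) x) := by
    rw [innA_adj' hA hTs x x, ← innA_conj hA x (T x)]
  rw [h1, innA, map_smul, inner_smul_left]
  have : (inner ℂ (A (T x + Ts x)) x : ℂ) = innA A (T x) x + innA A (Ts x) x := by
    simp [innA, inner_add_left]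
  rw [this, h2]
  rw [Complex.add_conj]
  rw [show ((starRingEnd ℂ) (2 : ℂ)⁻¹) = (2 : ℂ)⁻¹ by simp [Complex.ext_iff]]
  push_cast
  ring

lemma imA_inner (hA : A.IsPositive) (hTs : IsAAdjoint A T Ts) (x : H) :
    innA A ((ImA T Ts) x) x = -(((innA A (T x) x).im : ℝ) : ℂ) := by
  have h1 : (ImA T Ts) x = (2 * Complex.I)⁻¹ • (T x - Ts x) := by simp [ImA]
  have h2 : innA A (Ts x) x = (starRingEnd ℂ) (innA A (T x) x) := by
    rw [innA_adj' hA hTs x x, ← innA_conj hA x (T x)]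
  rw [h1, innA, map_smul, inner_smul_left]
  have : (inner ℂ (A (T x - Ts x)) x : ℂ) = innA A (T x) x - innA A (Ts x) x := by
    simp [innA, inner_sub_left]
  rw [this, h2, Complex.sub_conj]
  rw [show ((starRingEnd ℂ) ((2 * Complex.I)⁻¹)) = -(2 * Complex.I)⁻¹ by
    rw [map_inv₀, show (starRingEnd ℂ) (2 * Complex.I) = -(2 * Complex.I) by
      simp [Complex.ext_iff], inv_neg]]
  have hI : Complex.I ≠ 0 := Complex.I_ne_zero
  field_simp
  ring_nf
  push_cast
  ring

lemma Tx_decomp (T Ts : H →L[ℂ] H) (x : H) :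
    T x = (ReA T Ts) x + Complex.I • (ImA T Ts) x := by
  have h1 : (ReA T Ts) x = (2 : ℂ)⁻¹ • (T x + Ts x) := by simp [ReA]
  have h2 : (ImA T Ts) x = (2 * Complex.I)⁻¹ • (T x - Ts x) := by simp [ImA]
  rw [h1, h2, smul_smul]
  have hc : Complex.I * (2 * Complex.I)⁻¹ = (2 : ℂ)⁻¹ := by
    rw [mul_inv, mul_comm, mul_assoc, mul_comm Complex.I⁻¹ Complex.I,
      mul_inv_cancel₀ Complex.I_ne_zero, mul_one]
  rw [hc, smul_add, smul_sub]
  rw [show ((2:ℂ)⁻¹ • T x + (2:ℂ)⁻¹ • Ts x + ((2:ℂ)⁻¹ • T x - (2:ℂ)⁻¹ • Ts x))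
      = ((2:ℂ)⁻¹ + (2:ℂ)⁻¹) • T x by rw [add_smul]; abel]
  norm_num

lemma vnormA_T_le (hA : A.IsPositive) (hTs : IsAAdjoint A T Ts) (x : H) :
    vnormA A (T x) ≤ Real.sqrt ‖Ts.comp T‖ * vnormA A x := by
  have hD := TsT_selfadj hA hTs
  have h1 : vnormA A (T x) ^ 2 ≤ ‖Ts.comp T‖ * vnormA A x ^ 2 := by
    calc vnormA A (T x) ^ 2 = (innA A (T x) (T x)).re := vnormA_sq hA _
      _ ≤ ‖innA A (T x) (T x)‖ := Complex.re_le_norm _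
      _ = ‖innA A x ((Ts.comp T) x)‖ := by
          rw [innA_adj hA hTs x (T x)]; rfl
      _ ≤ vnormA A x * vnormA A ((Ts.comp T) x) := innA_abs_le hA _ _
      _ ≤ vnormA A x * (‖Ts.comp T‖ * vnormA A x) :=
          mul_le_mul_of_nonneg_left (vnormA_apply_le_selfadj hA hD x) (vnormA_nonneg _)
      _ = ‖Ts.comp T‖ * vnormA A x ^ 2 := by ring
  have := Real.sqrt_le_sqrt h1
  rwa [Real.sqrt_sq (vnormA_nonneg _), Real.sqrt_mul (norm_nonneg _),
    Real.sqrt_sq (vnormA_nonneg _)] at this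

theorem stmt0 (A T Ts : H →L[ℂ] H) (hA : A.IsPositive) (hTs : IsAAdjoint A T Ts) :
    wA A T ≥ opnormA A T / 2 + |opnormA A (ReA T Ts) - opnormA A (ImA T Ts)| / 2 := by
  by_cases hex : ∃ e : H, vnormA A e = 1
  · obtain ⟨e, he⟩ := hex
    -- boundedness of the numerical-range set
    have bddW : BddAbove {r : ℝ | ∃ x : H, vnormA A x = 1 ∧ r = ‖innA A (T x) x‖} := by
      refine ⟨Real.sqrt ‖Ts.comp T‖, fun r hr => ?_⟩
      obtain ⟨x, hx, rfl⟩ := hr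
      calc ‖innA A (T x) x‖ ≤ vnormA A (T x) * vnormA A x := innA_abs_le hA _ _
        _ = vnormA A (T x) := by rw [hx, mul_one]
        _ ≤ Real.sqrt ‖Ts.comp T‖ * vnormA A x := vnormA_T_le hA hTs x
        _ = Real.sqrt ‖Ts.comp T‖ := by rw [hx, mul_one]
    have hwunit : ∀ x : H, vnormA A x = 1 → ‖innA A (T x) x‖ ≤ wA A T :=
      fun x hx => le_csSup bddW ⟨x, hx, rfl⟩
    have hw0 : 0 ≤ wA A T := le_trans (norm_nonneg _) (hwunit e he)
    have hquadT := quad_bound hA hwunit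
    have hquadRe : ∀ u : H, ‖innA A ((ReA T Ts) u) u‖ ≤ wA A T * vnormA A u ^ 2 := by
      intro u
      rw [reA_inner hA hTs u, Complex.norm_real]
      exact le_trans (Complex.abs_re_le_norm _) (hquadT u)
    have hquadIm : ∀ u : H, ‖innA A ((ImA T Ts) u) u‖ ≤ wA A T * vnormA A u ^ 2 := by
      intro u
      rw [imA_inner hA hTs u, norm_neg, Complex.norm_real]
      exact le_trans (Complex.abs_im_le_norm _) (hquadT u)
    have hRe : ∀ x : H, vnormA A x = 1 → vnormA A ((ReA T Ts) x) ≤ wA A T :=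
      selfadj_vnorm_le_w hA (reA_selfadj hA hTs) hw0 hquadRe
    have hIm : ∀ x : H, vnormA A x = 1 → vnormA A ((ImA T Ts) x) ≤ wA A T :=
      selfadj_vnorm_le_w hA (imA_selfadj hA hTs) hw0 hquadIm
    have bddRe : BddAbove {r : ℝ | ∃ x : H, vnormA A x = 1 ∧ r = vnormA A ((ReA T Ts) x)} := by
      refine ⟨wA A T, fun r hr => ?_⟩
      obtain ⟨x, hx, rfl⟩ := hr
      exact hRe x hx
    have bddIm : BddAbove {r : ℝ | ∃ x : H, vnormA A x = 1 ∧ r = vnormA A ((ImA T Ts) x)} := by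
      refine ⟨wA A T, fun r hr => ?_⟩
      obtain ⟨x, hx, rfl⟩ := hr
      exact hIm x hx
    have hNRe_le : opnormA A (ReA T Ts) ≤ wA A T := by
      refine Real.sSup_le (fun r hr => ?_) hw0
      obtain ⟨x, hx, rfl⟩ := hr
      exact hRe x hx
    have hNIm_le : opnormA A (ImA T Ts) ≤ wA A T := by
      refine Real.sSup_le (fun r hr => ?_) hw0
      obtain ⟨x, hx, rfl⟩ := hr
      exact hIm x hx
    have hNRe0 : 0 ≤ opnormA A (ReA T Ts) :=
      le_trans (vnormA_nonneg _) (le_csSup bddRe ⟨e, he, rfl⟩)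
    have hNIm0 : 0 ≤ opnormA A (ImA T Ts) :=
      le_trans (vnormA_nonneg _) (le_csSup bddIm ⟨e, he, rfl⟩)
    have hNT_le : opnormA A T ≤ opnormA A (ReA T Ts) + opnormA A (ImA T Ts) := by
      refine Real.sSup_le (fun r hr => ?_) (add_nonneg hNRe0 hNIm0)
      obtain ⟨x, hx, rfl⟩ := hr
      have h1 : vnormA A ((ReA T Ts) x) ≤ opnormA A (ReA T Ts) := le_csSup bddRe ⟨x, hx, rfl⟩
      have h2 : vnormA A ((ImA T Ts) x) ≤ opnormA A (ImA T Ts) := le_csSup bddIm ⟨x, hx, rfl⟩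
      calc vnormA A (T x) = vnormA A ((ReA T Ts) x + Complex.I • (ImA T Ts) x) := by
            rw [← Tx_decomp]
        _ ≤ vnormA A ((ReA T Ts) x) + vnormA A (Complex.I • (ImA T Ts) x) := vnormA_add_le hA _ _
        _ = vnormA A ((ReA T Ts) x) + vnormA A ((ImA T Ts) x) := by
            rw [vnormA_smul hA]; simp
        _ ≤ opnormA A (ReA T Ts) + opnormA A (ImA T Ts) := add_le_add h1 h2
    rcases le_total (opnormA A (ReA T Ts)) (opnormA A (ImA T Ts)) with h | h
    · rw [ge_iff_le, abs_of_nonpos (by linarith)]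
      linarith
    · rw [ge_iff_le, _root_.abs_of_nonneg (by linarith : (0:ℝ) ≤ opnormA A (ReA T Ts) - opnormA A (ImA T Ts))]
      linarith
  · have hempty : ∀ S : H →L[ℂ] H,
        {r : ℝ | ∃ x : H, vnormA A x = 1 ∧ r = vnormA A (S x)} = (∅ : Set ℝ) := by
      intro S
      refine Set.eq_empty_iff_forall_notMem.mpr (fun r hr => ?_)
      obtain ⟨x, hx, _⟩ := hr
      exact hex ⟨x, hx⟩
    have hwempty :
        {r : ℝ | ∃ x : H, vnormA A x = 1 ∧ r = ‖innA A (T x) x‖} = (∅ : Set ℝ) := by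
      refine Set.eq_empty_iff_forall_notMem.mpr (fun r hr => ?_)
      obtain ⟨x, hx, _⟩ := hr
      exact hex ⟨x, hx⟩
    rw [wA, opnormA, opnormA, opnormA, hempty, hempty, hempty, hwempty, Real.sSup_empty]
    norm_num
end
end

section
/- Let T be a bounded linear operator on H admitting an A-adjoint T♯. If w_A(T) = ‖T‖_A/2, then ‖Re_A(T)‖_A = ‖Im_A(T)‖_A = ‖T‖_A/2. -/
noncomputable section

open Complex ContinuousLinearMap

variable {H : Type*} [NormedAddCommGroup H] [InnerProductSpace ℂ H] [CompleteSpace H]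

set_option maxHeartbeats 1000000
set_option synthInstance.maxHeartbeats 1000000
section aux

theorem exists_B (A : H →L[ℂ] H) (hA : A.IsPositive) :
    ∃ B : H →L[ℂ] H, ∀ x y : H, innA A x y = (inner ℂ (B x) (B y) : ℂ) := by
  have h0 : (0:H →L[ℂ] H) ≤ A := (ContinuousLinearMap.nonneg_iff_isPositive A).mpr hA
  set B := CFC.sqrt A with hBdef
  refine ⟨B, fun x y => ?_⟩
  have hsa : ContinuousLinearMap.adjoint B = B :=
    (isSelfAdjoint_iff' (A := B)).mp
      ((ContinuousLinearMap.nonneg_iff_isPositive _).mp (CFC.sqrt_nonneg A)).isSelfAdjoint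
  have hBB : B * B = A := CFC.sqrt_mul_sqrt_self A h0
  have hx : A x = B (B x) := by rw [← hBB]; rfl
  have h2 := ContinuousLinearMap.adjoint_inner_left B y (B x)
  rw [innA, hx]
  rw [hsa] at h2
  exact h2


theorem pow2_le_aux {N D E : ℝ} (hN : 0 ≤ N) (hD : 0 ≤ D)
    (h : ∀ k : ℕ, N ^ (2^k) ≤ E * D ^ (2^k)) : N ≤ D := by
  by_contra h'
  push_neg at h'
  have hNpos : 0 < N := lt_of_le_of_lt hD h'
  rcases eq_or_lt_of_le hD with hD0 | hDpos
  · have := h 0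
    simp [← hD0] at this
    linarith
  have hq : 1 < N / D := (one_lt_div hDpos).mpr h'
  obtain ⟨n, hn⟩ := pow_unbounded_of_one_lt E hq
  have h1 : (N / D) ^ (2^n) ≤ E := by
    rw [div_pow, div_le_iff₀ (by positivity)]
    exact h n
  have h2 : (N / D) ^ n ≤ (N / D) ^ (2^n) :=
    pow_le_pow_right₀ hq.le (Nat.lt_two_pow_self (n := n)).le
  linarith

theorem swap_pow (A B R : H →L[ℂ] H)
    (hR : A.comp R = (ContinuousLinearMap.adjoint R).comp A) :
    ∀ (n : ℕ) (u v : H), (inner ℂ (A ((R^n) u)) v : ℂ) = inner ℂ (A u) ((R^n) v) := by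
  have swap1 : ∀ u v : H, (inner ℂ (A (R u)) v : ℂ) = inner ℂ (A u) (R v) := by
    intro u v
    have h1 : A (R u) = (ContinuousLinearMap.adjoint R) (A u) := by
      have := congrArg (fun S : H →L[ℂ] H => S u) hR
      simpa using this
    rw [h1]
    exact ContinuousLinearMap.adjoint_inner_left R v (A u)
  intro n
  induction n with
  | zero => intro u v; simp
  | succ n ih =>
    intro u v
    have e1 : (R^(n+1)) u = R ((R^n) u) := by rw [pow_succ']; rfl
    have e2 : (R^n) (R v) = (R^(n+1)) v := by rw [pow_succ]; rfl
    rw [e1, swap1, ← e2, ih]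

theorem bound_selfadj (A B R : H →L[ℂ] H)
    (hB : ∀ x y : H, innA A x y = (inner ℂ (B x) (B y) : ℂ))
    (hR : A.comp R = (ContinuousLinearMap.adjoint R).comp A) (x : H) :
    ‖B (R x)‖ ≤ ‖R‖ * ‖B x‖ := by
  have hsq : ∀ u : H, ((inner ℂ (B u) (B u) : ℂ)).re = ‖B u‖^2 := fun u => by
    rw [inner_self_eq_norm_sq_to_K]; norm_cast
  -- key inequality
  have key : ∀ m : ℕ, ‖B ((R^m) x)‖^2 ≤ ‖B x‖ * ‖B ((R^(2*m)) x)‖ := by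
    intro m
    have e0 : (inner ℂ (B ((R^m) x)) (B ((R^m) x)) : ℂ) = inner ℂ (B x) (B ((R^(2*m)) x)) := by
      rw [← hB, ← hB, innA, innA, swap_pow A B R hR m x ((R^m) x)]
      congr 1
      rw [two_mul, pow_add]
      rfl
    calc ‖B ((R^m) x)‖^2 = ((inner ℂ (B x) (B ((R^(2*m)) x)) : ℂ)).re := by rw [← hsq, e0]
      _ ≤ ‖(inner ℂ (B x) (B ((R^(2*m)) x)) : ℂ)‖ := by
          exact Complex.re_le_norm _
      _ ≤ ‖B x‖ * ‖B ((R^(2*m)) x)‖ := norm_inner_le_norm _ _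
  -- iterated claim
  have claim : ∀ k : ℕ, ‖B (R x)‖^(2^k) ≤ ‖B x‖^(2^k - 1) * ‖B ((R^(2^k)) x)‖ := by
    intro k
    induction k with
    | zero => simp
    | succ k ih =>
      have h1 : (‖B (R x)‖^(2^k))^2 ≤ (‖B x‖^(2^k - 1) * ‖B ((R^(2^k)) x)‖)^2 :=
        pow_le_pow_left₀ (pow_nonneg (norm_nonneg _) _) ih 2
      have h2 : (‖B x‖^(2^k - 1) * ‖B ((R^(2^k)) x)‖)^2
          = ‖B x‖^(2*(2^k - 1)) * ‖B ((R^(2^k)) x)‖^2 := by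
        rw [mul_pow, ← pow_mul]; ring_nf
      have h3 : ‖B ((R^(2^k)) x)‖^2 ≤ ‖B x‖ * ‖B ((R^(2^(k+1))) x)‖ := by
        have := key (2^k)
        rwa [← pow_succ'] at this
      calc ‖B (R x)‖^(2^(k+1)) = (‖B (R x)‖^(2^k))^2 := by
            rw [← pow_mul, pow_succ]
        _ ≤ (‖B x‖^(2^k - 1) * ‖B ((R^(2^k)) x)‖)^2 := h1
        _ = ‖B x‖^(2*(2^k - 1)) * ‖B ((R^(2^k)) x)‖^2 := h2
        _ ≤ ‖B x‖^(2*(2^k - 1)) * (‖B x‖ * ‖B ((R^(2^(k+1))) x)‖) := by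
            exact mul_le_mul_of_nonneg_left h3 (pow_nonneg (norm_nonneg _) _)
        _ = ‖B x‖^(2^(k+1) - 1) * ‖B ((R^(2^(k+1))) x)‖ := by
            rw [← mul_assoc, ← pow_succ]
            congr 2
            have : 1 ≤ 2^k := Nat.one_le_two_pow
            omega
  -- reduce to scalar lemma
  by_cases hx0 : ‖B x‖ = 0
  · have h6 := claim 1
    simp only [pow_one, hx0] at h6
    have h7 : ‖B (R x)‖^(2:ℕ) ≤ 0 := by
      have : (2:ℕ)^1 = 2 := by norm_num
      simpa [this, hx0] using h6
    have h8 : ‖B (R x)‖ = 0 := by nlinarith [norm_nonneg (B (R x)), sq_nonneg (‖B (R x)‖)]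
    rw [h8, hx0, mul_zero]
  · have hBx : 0 < ‖B x‖ := lt_of_le_of_ne (norm_nonneg _) (Ne.symm hx0)
    apply pow2_le_aux (norm_nonneg _) (by positivity) (E := ‖B‖ * ‖x‖ / ‖B x‖)
    intro k
    have h5 : ‖B x‖^(2^k-1) * ‖B x‖ = ‖B x‖^(2^k) := by
      rw [← pow_succ]
      congr 1
      have : 1 ≤ 2^k := Nat.one_le_two_pow
      omega
    have hbd : ‖B ((R^(2^k)) x)‖ ≤ ‖B‖ * (‖R‖^(2^k) * ‖x‖) := by
      refine (B.le_opNorm _).trans ?_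
      refine mul_le_mul_of_nonneg_left ?_ (norm_nonneg B)
      refine ((R^(2^k)).le_opNorm x).trans ?_
      exact mul_le_mul_of_nonneg_right (norm_pow_le' R (Nat.two_pow_pos k))
        (norm_nonneg x)
    have hmain : ‖B (R x)‖^(2^k) ≤ ‖B x‖^(2^k-1) * (‖B‖ * (‖R‖^(2^k) * ‖x‖)) :=
      (claim k).trans (mul_le_mul_of_nonneg_left hbd (pow_nonneg (norm_nonneg _) _))
    have heq : ‖B‖ * ‖x‖ / ‖B x‖ * (‖R‖ * ‖B x‖) ^ (2^k)
        = ‖B x‖^(2^k-1) * (‖B‖ * (‖R‖^(2^k) * ‖x‖)) := by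
      rw [mul_pow, ← h5]
      field_simp
    rw [heq]
    exact hmain

variable (A B : H →L[ℂ] H)

variable (A B : H →L[ℂ] H)

theorem vnormA_eq_norm (hB : ∀ x y : H, innA A x y = (inner ℂ (B x) (B y) : ℂ)) (x : H) :
    vnormA A x = ‖B x‖ := by
  rw [vnormA, hB, inner_self_eq_norm_sq_to_K]
  norm_cast
  exact Real.sqrt_sq (norm_nonneg _)

theorem opnormA_nonneg (T : H →L[ℂ] H) : 0 ≤ opnormA A T := by
  apply Real.sSup_nonneg
  rintro r ⟨x, -, rfl⟩
  exact Real.sqrt_nonneg _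

theorem wA_nonneg (T : H →L[ℂ] H) : 0 ≤ wA A T := by
  apply Real.sSup_nonneg
  rintro r ⟨x, -, rfl⟩
  exact norm_nonneg _

theorem opnormA_le (hB : ∀ x y : H, innA A x y = (inner ℂ (B x) (B y) : ℂ))
    {S : H →L[ℂ] H} {c : ℝ} (hc : 0 ≤ c) (hbd : ∀ x, ‖B (S x)‖ ≤ c * ‖B x‖) :
    opnormA A S ≤ c := by
  apply Real.sSup_le _ hc
  rintro r ⟨x, hx1, rfl⟩
  rw [vnormA_eq_norm A B hB] at hx1 ⊢
  simpa [hx1] using hbd x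

theorem le_opnormA (hB : ∀ x y : H, innA A x y = (inner ℂ (B x) (B y) : ℂ))
    {S : H →L[ℂ] H} {c : ℝ} (hc : 0 ≤ c) (hbd : ∀ x, ‖B (S x)‖ ≤ c * ‖B x‖) (x : H) :
    ‖B (S x)‖ ≤ opnormA A S * ‖B x‖ := by
  by_cases hx0 : ‖B x‖ = 0
  · have := hbd x
    rw [hx0, mul_zero] at this ⊢
    exact this
  · have hBx : 0 < ‖B x‖ := lt_of_le_of_ne (norm_nonneg _) (Ne.symm hx0)
    set t := ‖B x‖ with ht
    set u : H := ((t⁻¹ : ℝ) : ℂ) • x with hu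
    have hBu : ‖B u‖ = 1 := by
      rw [hu, map_smul, norm_smul]
      rw [Complex.norm_real, Real.norm_eq_abs, abs_of_pos (inv_pos.mpr hBx)]
      field_simp
      exact ht.symm
    have hmem : vnormA A (S u) ∈ {r : ℝ | ∃ x : H, vnormA A x = 1 ∧ r = vnormA A (S x)} :=
      ⟨u, by rw [vnormA_eq_norm A B hB, hBu], rfl⟩
    have hbdd : BddAbove {r : ℝ | ∃ x : H, vnormA A x = 1 ∧ r = vnormA A (S x)} := by
      refine ⟨c, ?_⟩
      rintro r ⟨y, hy1, rfl⟩
      rw [vnormA_eq_norm A B hB] at hy1 ⊢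
      simpa [hy1] using hbd y
    have hle := le_csSup hbdd hmem
    rw [vnormA_eq_norm A B hB, hu, map_smul, map_smul, norm_smul] at hle
    simp only [Complex.norm_real, Real.norm_eq_abs, abs_of_pos (inv_pos.mpr hBx)] at hle
    have : t⁻¹ * ‖B (S x)‖ ≤ opnormA A S := hle
    calc ‖B (S x)‖ = (t⁻¹ * ‖B (S x)‖) * t := by field_simp
      _ ≤ opnormA A S * t := by
          exact mul_le_mul_of_nonneg_right this hBx.le

theorem le_wA (hB : ∀ x y : H, innA A x y = (inner ℂ (B x) (B y) : ℂ))
    {S : H →L[ℂ] H} {c : ℝ} (hc : 0 ≤ c) (hbd : ∀ x, ‖B (S x)‖ ≤ c * ‖B x‖) (x : H) :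
    ‖innA A (S x) x‖ ≤ wA A S * ‖B x‖^2 := by
  have habs : ∀ y : H, ‖innA A (S y) y‖ ≤ c * ‖B y‖^2 := by
    intro y
    rw [hB]
    calc ‖inner ℂ (B (S y)) (B y)‖ = ‖(inner ℂ (B (S y)) (B y) : ℂ)‖ := rfl
      _ ≤ ‖B (S y)‖ * ‖B y‖ := norm_inner_le_norm _ _
      _ ≤ (c * ‖B y‖) * ‖B y‖ := mul_le_mul_of_nonneg_right (hbd y) (norm_nonneg _)
      _ = c * ‖B y‖^2 := by ring
  by_cases hx0 : ‖B x‖ = 0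
  · have := habs x
    rw [hx0] at this ⊢
    simpa using this
  · have hBx : 0 < ‖B x‖ := lt_of_le_of_ne (norm_nonneg _) (Ne.symm hx0)
    set t := ‖B x‖ with ht
    set u : H := ((t⁻¹ : ℝ) : ℂ) • x with hu
    have hBu : ‖B u‖ = 1 := by
      rw [hu, map_smul, norm_smul, Complex.norm_real, Real.norm_eq_abs,
        abs_of_pos (inv_pos.mpr hBx)]
      field_simp
      exact ht.symm
    have hbdd : BddAbove {r : ℝ | ∃ y : H, vnormA A y = 1 ∧ r = ‖innA A (S y) y‖} := by
      refine ⟨c, ?_⟩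
      rintro r ⟨y, hy1, rfl⟩
      rw [vnormA_eq_norm A B hB] at hy1
      simpa [hy1] using habs y
    have hmem : ‖innA A (S u) u‖
        ∈ {r : ℝ | ∃ y : H, vnormA A y = 1 ∧ r = ‖innA A (S y) y‖} :=
      ⟨u, by rw [vnormA_eq_norm A B hB, hBu], rfl⟩
    have hle := le_csSup hbdd hmem
    have hscale : ‖innA A (S u) u‖ = t⁻¹ * t⁻¹ * ‖innA A (S x) x‖ := by
      rw [hu, innA, map_smul, map_smul, inner_smul_left, inner_smul_right, innA, norm_mul,
        norm_mul, Complex.norm_conj, Complex.norm_real, Real.norm_eq_abs, abs_of_pos (inv_pos.mpr hBx)]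
      ring
    rw [hscale] at hle
    have h2 : ‖innA A (S x) x‖ = (t⁻¹ * t⁻¹ * ‖innA A (S x) x‖) * t^2 := by
      field_simp
    rw [h2]
    calc (t⁻¹ * t⁻¹ * ‖innA A (S x) x‖) * t^2 ≤ wA A S * t^2 :=
      mul_le_mul_of_nonneg_right hle (by positivity)
      _ = wA A S * ‖B x‖^2 := by rw [ht]

theorem wA_mono (hB : ∀ x y : H, innA A x y = (inner ℂ (B x) (B y) : ℂ))
    {S T : H →L[ℂ] H} {c : ℝ} (hc : 0 ≤ c) (hbdT : ∀ x, ‖B (T x)‖ ≤ c * ‖B x‖)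
    (h : ∀ x, ‖innA A (S x) x‖ ≤ ‖innA A (T x) x‖) :
    wA A S ≤ wA A T := by
  apply Real.sSup_le _ (wA_nonneg A T)
  rintro r ⟨x, hx1, rfl⟩
  have hbdd : BddAbove {r : ℝ | ∃ y : H, vnormA A y = 1 ∧ r = ‖innA A (T y) y‖} := by
    refine ⟨c, ?_⟩
    rintro r ⟨y, hy1, rfl⟩
    rw [vnormA_eq_norm A B hB] at hy1
    rw [hB]
    calc ‖inner ℂ (B (T y)) (B y)‖ = ‖(inner ℂ (B (T y)) (B y) : ℂ)‖ := rfl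
      _ ≤ ‖B (T y)‖ * ‖B y‖ := norm_inner_le_norm _ _
      _ ≤ (c * ‖B y‖) * ‖B y‖ := mul_le_mul_of_nonneg_right (hbdT y) (norm_nonneg _)
      _ = c := by rw [hy1]; ring
  exact (h x).trans (le_csSup hbdd ⟨x, hx1, rfl⟩)

theorem opnormA_le_wA (hB : ∀ x y : H, innA A x y = (inner ℂ (B x) (B y) : ℂ))
    {S : H →L[ℂ] H} {c : ℝ} (hc : 0 ≤ c) (hbd : ∀ x, ‖B (S x)‖ ≤ c * ‖B x‖)
    (hsym : ∀ x y : H, innA A (S y) x = (starRingEnd ℂ) (innA A (S x) y)) :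
    opnormA A S ≤ wA A S := by
  apply Real.sSup_le _ (wA_nonneg A S)
  rintro r ⟨x, hx1, rfl⟩
  rw [vnormA_eq_norm A B hB] at hx1 ⊢
  by_cases hs0 : ‖B (S x)‖ = 0
  · rw [hs0]; exact wA_nonneg A S
  have hspos : 0 < ‖B (S x)‖ := lt_of_le_of_ne (norm_nonneg _) (Ne.symm hs0)
  set s := ‖B (S x)‖ with hs
  set y : H := ((s⁻¹ : ℝ) : ℂ) • (S x) with hy
  have hBy : ‖B y‖ = 1 := by
    rw [hy, map_smul, norm_smul, Complex.norm_real, Real.norm_eq_abs,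
      abs_of_pos (inv_pos.mpr hspos)]
    field_simp
    exact hs.symm
  have hz : innA A (S x) y = (s : ℂ) := by
    rw [hB, hy, map_smul, inner_smul_right, inner_self_eq_norm_sq_to_K, ← hs]
    have hsne : (s:ℂ) ≠ 0 := Complex.ofReal_ne_zero.mpr hs0
    push_cast
    field_simp
    rfl

  have hpol : innA A (S (x+y)) (x+y) - innA A (S (x-y)) (x-y)
      = 2 * (innA A (S x) y + innA A (S y) x) := by
    simp only [innA, map_add, map_sub, inner_add_left, inner_add_right, inner_sub_left,
      inner_sub_right]
    ring
  rw [hsym x y, hz, Complex.conj_ofReal] at hpol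
  have hre : (innA A (S (x+y)) (x+y)).re - (innA A (S (x-y)) (x-y)).re = 4 * s := by
    have h0 := congrArg Complex.re hpol
    rw [Complex.sub_re] at h0
    have h1 : (2*((s:ℂ)+(s:ℂ))) = ((4*s : ℝ) : ℂ) := by push_cast; ring
    rw [h0, h1, Complex.ofReal_re]
  have h1 : (innA A (S (x+y)) (x+y)).re ≤ wA A S * ‖B (x+y)‖^2 :=
    le_trans (le_trans (Complex.re_le_norm _) (le_refl _)) (le_wA A B hB hc hbd (x+y))
  have h2 : -((innA A (S (x-y)) (x-y)).re) ≤ wA A S * ‖B (x-y)‖^2 := by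
    refine le_trans ?_ (le_wA A B hB hc hbd (x-y))
    calc -((innA A (S (x-y)) (x-y)).re) ≤ |(innA A (S (x-y)) (x-y)).re| := neg_le_abs _
      _ ≤ ‖innA A (S (x-y)) (x-y)‖ := Complex.abs_re_le_norm _
  have hpar : ‖B (x+y)‖^2 + ‖B (x-y)‖^2 = 4 := by
    have := parallelogram_law_with_norm ℂ (B x) (B y)
    rw [← map_add B x y, ← map_sub B x y] at this
    rw [hx1, hBy] at this
    nlinarith [this]
  nlinarith [h1, h2, hre, hpar, wA_nonneg A S]

end aux

theorem bound_of_adjoint (A B T Ts : H →L[ℂ] H)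
    (hB : ∀ x y : H, innA A x y = (inner ℂ (B x) (B y) : ℂ))
    (hz : A.comp T = (ContinuousLinearMap.adjoint Ts).comp A)
    (hw : A.comp Ts = (ContinuousLinearMap.adjoint T).comp A) (x : H) :
    ‖B (T x)‖ ≤ Real.sqrt ‖Ts.comp T‖ * ‖B x‖ := by
  have hzp : ∀ u, A (T u) = (ContinuousLinearMap.adjoint Ts) (A u) := fun u => by
    have := congrArg (fun S : H →L[ℂ] H => S u) hz; simpa using this
  have hwp : ∀ u, A (Ts u) = (ContinuousLinearMap.adjoint T) (A u) := fun u => by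
    have := congrArg (fun S : H →L[ℂ] H => S u) hw; simpa using this
  have hR : A.comp (Ts.comp T) = (ContinuousLinearMap.adjoint (Ts.comp T)).comp A := by
    ext u
    simp only [ContinuousLinearMap.comp_apply, ContinuousLinearMap.adjoint_comp]
    rw [hwp, hzp]
  have hsq : ∀ u : H, ((inner ℂ (B u) (B u) : ℂ)).re = ‖B u‖^2 := fun u => by
    rw [inner_self_eq_norm_sq_to_K]; norm_cast
  have step : ‖B (T x)‖^2 ≤ ‖B x‖ * ‖B ((Ts.comp T) x)‖ := by
    have e0 : (inner ℂ (B (T x)) (B (T x)) : ℂ) = inner ℂ (B x) (B ((Ts.comp T) x)) := by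
      rw [← hB, ← hB, innA, innA, hzp x]
      exact ContinuousLinearMap.adjoint_inner_left Ts (T x) (A x)
    calc ‖B (T x)‖^2 = ((inner ℂ (B x) (B ((Ts.comp T) x)) : ℂ)).re := by rw [← hsq, e0]
      _ ≤ ‖(inner ℂ (B x) (B ((Ts.comp T) x)) : ℂ)‖ := by
          exact Complex.re_le_norm _
      _ ≤ ‖B x‖ * ‖B ((Ts.comp T) x)‖ := norm_inner_le_norm _ _
  have step2 : ‖B (T x)‖^2 ≤ ‖Ts.comp T‖ * ‖B x‖^2 := by
    have := bound_selfadj A B (Ts.comp T) hB hR x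
    nlinarith [norm_nonneg (B x), norm_nonneg (B ((Ts.comp T) x)), norm_nonneg (Ts.comp T)]
  calc ‖B (T x)‖ = Real.sqrt (‖B (T x)‖^2) := (Real.sqrt_sq (norm_nonneg _)).symm
    _ ≤ Real.sqrt (‖Ts.comp T‖ * ‖B x‖^2) := Real.sqrt_le_sqrt step2
    _ = Real.sqrt ‖Ts.comp T‖ * ‖B x‖ := by
        rw [Real.sqrt_mul (norm_nonneg _), Real.sqrt_sq (norm_nonneg _)]

theorem stmt3 (A T Ts : H →L[ℂ] H) (hA : A.IsPositive) (hTs : IsAAdjoint A T Ts)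
    (hw : wA A T = opnormA A T / 2) :
    opnormA A (ReA T Ts) = opnormA A T / 2 ∧ opnormA A (ImA T Ts) = opnormA A T / 2 := by
  obtain ⟨B, hB⟩ := exists_B A hA
  have hAsa : ContinuousLinearMap.adjoint A = A := isSelfAdjoint_iff'.mp hA.isSelfAdjoint
  have hTs' : A.comp Ts = (ContinuousLinearMap.adjoint T).comp A := hTs
  have hTadj : A.comp T = (ContinuousLinearMap.adjoint Ts).comp A := by
    have h := congrArg ContinuousLinearMap.adjoint hTs'
    rw [ContinuousLinearMap.adjoint_comp, ContinuousLinearMap.adjoint_comp, hAsa,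
      ContinuousLinearMap.adjoint_adjoint] at h
    exact h.symm
  have hzp : ∀ u, A (T u) = (ContinuousLinearMap.adjoint Ts) (A u) := fun u => by
    have := congrArg (fun S : H →L[ℂ] H => S u) hTadj; simpa using this
  have hwp : ∀ u, A (Ts u) = (ContinuousLinearMap.adjoint T) (A u) := fun u => by
    have := congrArg (fun S : H →L[ℂ] H => S u) hTs'; simpa using this
  have hc1 : ∀ u v : H, (inner ℂ (A (Ts u)) v : ℂ) = (starRingEnd ℂ) (inner ℂ (A (T v)) u) := by
    intro u v
    rw [hwp u, ContinuousLinearMap.adjoint_inner_left T v (A u),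
      show (inner ℂ (A u) (T v) : ℂ) = inner ℂ (B u) (B (T v)) from hB u (T v),
      show (inner ℂ (A (T v)) u : ℂ) = inner ℂ (B (T v)) (B u) from hB (T v) u,
      inner_conj_symm]
  have hc2 : ∀ u v : H, (inner ℂ (A (T u)) v : ℂ) = (starRingEnd ℂ) (inner ℂ (A (Ts v)) u) := by
    intro u v
    rw [hzp u, ContinuousLinearMap.adjoint_inner_left Ts v (A u),
      show (inner ℂ (A u) (Ts v) : ℂ) = inner ℂ (B u) (B (Ts v)) from hB u (Ts v),
      show (inner ℂ (A (Ts v)) u : ℂ) = inner ℂ (B (Ts v)) (B u) from hB (Ts v) u,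
      inner_conj_symm]
  have bT : ∀ x, ‖B (T x)‖ ≤ Real.sqrt ‖Ts.comp T‖ * ‖B x‖ :=
    bound_of_adjoint A B T Ts hB hTadj hTs'
  have bTs : ∀ x, ‖B (Ts x)‖ ≤ Real.sqrt ‖T.comp Ts‖ * ‖B x‖ :=
    bound_of_adjoint A B Ts T hB hTs' hTadj
  set cT := Real.sqrt ‖Ts.comp T‖ with hcT
  set cTs := Real.sqrt ‖T.comp Ts‖ with hcTs
  have hcT0 : 0 ≤ cT := Real.sqrt_nonneg _
  have hcTs0 : 0 ≤ cTs := Real.sqrt_nonneg _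
  set c := cT + cTs with hcdef
  have hc0 : 0 ≤ c := by positivity
  have bT' : ∀ x, ‖B (T x)‖ ≤ c * ‖B x‖ := fun x => (bT x).trans
    (mul_le_mul_of_nonneg_right (le_add_of_nonneg_right hcTs0) (norm_nonneg _))
  have eRe : ∀ u : H, (ReA T Ts) u = (2:ℂ)⁻¹ • (T u + Ts u) := fun u => rfl
  have eIm : ∀ u : H, (ImA T Ts) u = (2*Complex.I)⁻¹ • (T u - Ts u) := fun u => rfl
  have hn2 : ‖((2:ℂ))⁻¹‖ = 2⁻¹ := by simp
  have hn2I : ‖((2*Complex.I : ℂ))⁻¹‖ = 2⁻¹ := by simp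
  have bRe : ∀ x, ‖B ((ReA T Ts) x)‖ ≤ c * ‖B x‖ := by
    intro x
    rw [eRe, map_smul, norm_smul, hn2, map_add]
    have := norm_add_le (B (T x)) (B (Ts x))
    have h1 := bT x; have h2 := bTs x
    calc (2:ℝ)⁻¹ * ‖B (T x) + B (Ts x)‖ ≤ 2⁻¹ * (cT * ‖B x‖ + cTs * ‖B x‖) := by
          apply mul_le_mul_of_nonneg_left _ (by norm_num)
          linarith
      _ ≤ c * ‖B x‖ := by rw [hcdef]; nlinarith [norm_nonneg (B x)]
  have bIm : ∀ x, ‖B ((ImA T Ts) x)‖ ≤ c * ‖B x‖ := by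
    intro x
    rw [eIm, map_smul, norm_smul, hn2I, map_sub]
    have := norm_sub_le (B (T x)) (B (Ts x))
    have h1 := bT x; have h2 := bTs x
    calc (2:ℝ)⁻¹ * ‖B (T x) - B (Ts x)‖ ≤ 2⁻¹ * (cT * ‖B x‖ + cTs * ‖B x‖) := by
          apply mul_le_mul_of_nonneg_left _ (by norm_num)
          linarith
      _ ≤ c * ‖B x‖ := by rw [hcdef]; nlinarith [norm_nonneg (B x)]
  have hsymRe : ∀ x y : H, innA A ((ReA T Ts) y) x = (starRingEnd ℂ) (innA A ((ReA T Ts) x) y) := by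
    intro x y
    rw [innA, innA, eRe, eRe, map_smul, map_smul, inner_smul_left, inner_smul_left,
      map_add, map_add, inner_add_left, inner_add_left, hc2 y x, hc1 y x]
    simp only [map_mul, map_add, Complex.conj_conj, map_inv₀, map_ofNat]
    ring
  have hsymIm : ∀ x y : H, innA A ((ImA T Ts) y) x = (starRingEnd ℂ) (innA A ((ImA T Ts) x) y) := by
    intro x y
    rw [innA, innA, eIm, eIm, map_smul, map_smul, inner_smul_left, inner_smul_left,
      map_sub, map_sub, inner_sub_left, inner_sub_left, hc2 y x, hc1 y x]
    simp only [map_mul, map_sub, map_neg, inv_neg, Complex.conj_conj, map_inv₀, map_ofNat,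
      Complex.conj_I]
    ring
  have habsRe : ∀ x : H, ‖innA A ((ReA T Ts) x) x‖ ≤ ‖innA A (T x) x‖ := by
    intro x
    have hval : innA A ((ReA T Ts) x) x = (((innA A (T x) x).re : ℝ) : ℂ) := by
      rw [innA, eRe, map_smul, inner_smul_left, map_add, inner_add_left, hc1 x x,
        show innA A (T x) x = (inner ℂ (A (T x)) x : ℂ) from rfl, Complex.add_conj,
        show (starRingEnd ℂ) ((2:ℂ)⁻¹) = 2⁻¹ from by norm_num [Complex.ext_iff]]
      push_cast
      ring
    rw [hval, Complex.norm_real, Real.norm_eq_abs]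
    exact Complex.abs_re_le_norm _
  have habsIm : ∀ x : H, ‖innA A ((ImA T Ts) x) x‖ ≤ ‖innA A (T x) x‖ := by
    intro x
    have hval : innA A ((ImA T Ts) x) x = ((-(innA A (T x) x).im : ℝ) : ℂ) := by
      rw [innA, eIm, map_smul, inner_smul_left, map_sub, inner_sub_left, hc1 x x,
        show innA A (T x) x = (inner ℂ (A (T x)) x : ℂ) from rfl, Complex.sub_conj,
        show (starRingEnd ℂ) (((2:ℂ)*Complex.I)⁻¹) = Complex.I/2 from by
          norm_num [Complex.ext_iff]]
      push_cast
      have : Complex.I * Complex.I = -1 := Complex.I_mul_I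
      field_simp
      linear_combination (((inner ℂ (A (T x)) x).im : ℂ)) * this
    rw [hval, Complex.norm_real, Real.norm_eq_abs, abs_neg]
    exact Complex.abs_im_le_norm _
  have wRe_le : wA A (ReA T Ts) ≤ wA A T := wA_mono A B hB hc0 bT' habsRe
  have wIm_le : wA A (ImA T Ts) ≤ wA A T := wA_mono A B hB hc0 bT' habsIm
  have aRe : opnormA A (ReA T Ts) ≤ wA A (ReA T Ts) := opnormA_le_wA A B hB hc0 bRe hsymRe
  have aIm : opnormA A (ImA T Ts) ≤ wA A (ImA T Ts) := opnormA_le_wA A B hB hc0 bIm hsymIm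
  have hdec : ∀ x : H, T x = (ReA T Ts) x + Complex.I • (ImA T Ts) x := by
    intro x
    rw [eRe, eIm, smul_smul]
    have hI : Complex.I * (2*Complex.I)⁻¹ = (2:ℂ)⁻¹ := by
      field_simp
    rw [hI, smul_add, smul_sub]
    module
  have n_le : opnormA A T ≤ opnormA A (ReA T Ts) + opnormA A (ImA T Ts) := by
    apply Real.sSup_le _ (add_nonneg (opnormA_nonneg A _) (opnormA_nonneg A _))
    rintro r ⟨x, hx1, rfl⟩
    rw [vnormA_eq_norm A B hB] at hx1 ⊢
    have h1 := le_opnormA A B hB hc0 bRe x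
    have h2 := le_opnormA A B hB hc0 bIm x
    rw [hx1, mul_one] at h1 h2
    calc ‖B (T x)‖ = ‖B ((ReA T Ts) x) + Complex.I • B ((ImA T Ts) x)‖ := by
          rw [← map_smul, ← map_add, ← hdec x]
      _ ≤ ‖B ((ReA T Ts) x)‖ + ‖Complex.I • B ((ImA T Ts) x)‖ := norm_add_le _ _
      _ = ‖B ((ReA T Ts) x)‖ + ‖B ((ImA T Ts) x)‖ := by
          rw [norm_smul, Complex.norm_I, one_mul]
      _ ≤ _ := add_le_add h1 h2
  have haRe : opnormA A (ReA T Ts) ≤ opnormA A T / 2 := by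
    rw [← hw]; exact aRe.trans wRe_le
  have haIm : opnormA A (ImA T Ts) ≤ opnormA A T / 2 := by
    rw [← hw]; exact aIm.trans wIm_le
  constructor <;> linarith
end
end

section
/- Let T be a bounded linear operator on H admitting an A-adjoint T♯. Then w_A(T) = ‖T‖_A/2 if and only if for every θ ∈ ℝ one has ‖(e^{iθ}T + e^{−iθ}T♯)/2‖_A = ‖(e^{iθ}T − e^{−iθ}T♯)/(2i)‖_A = ‖T‖_A/2 (note that e^{−iθ}T♯ is an A-adjoint of e^{iθ}T, so these are ‖Re_A(e^{iθ}T)‖_A and ‖Im_A(e^{iθ}T)‖_A). -/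
set_option linter.unusedSectionVars false
set_option maxHeartbeats 1600000
set_option synthInstance.maxHeartbeats 1000000

noncomputable section

open Complex ContinuousLinearMap

variable {H : Type*} [NormedAddCommGroup H] [InnerProductSpace ℂ H] [CompleteSpace H]

namespace Stmt4Aux

local notation "⟪" x ", " y "⟫" => @inner ℂ _ _ x y

lemma comp_pow' (A S : H →L[ℂ] H) (hS : A * S = adjoint S * A) (m : ℕ) :
    A * S ^ m = (adjoint S) ^ m * A := by
  induction m with
  | zero => simp
  | succ n ih => rw [pow_succ, ← mul_assoc, ih, mul_assoc, hS, ← mul_assoc, ← pow_succ]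

lemma key_sq (A R S : H →L[ℂ] H)
    (hRR : ∀ u v : H, ⟪A u, v⟫ = ⟪R u, R v⟫)
    (hS : A * S = adjoint S * A) (m : ℕ) (x : H) :
    ‖R ((S ^ m) x)‖ ^ 2 ≤ ‖R ((S ^ (2 * m)) x)‖ * ‖R x‖ := by
  have h1 : ⟪A ((S ^ m) x), (S ^ m) x⟫ = ⟪A x, (S ^ (2 * m)) x⟫ := by
    have e1 : A ((S ^ m) x) = ((adjoint S) ^ m) (A x) := by
      have := congrArg (fun U : H →L[ℂ] H => U x) (comp_pow' A S hS m)
      simpa [mul_apply] using this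
    have e2 : (adjoint S) ^ m = adjoint (S ^ m) := by
      rw [← star_eq_adjoint, ← star_eq_adjoint, star_pow]
    rw [e1, e2, adjoint_inner_left]
    congr 1
    rw [← ContinuousLinearMap.mul_apply, ← pow_add, two_mul]
  have h2 : ‖R ((S ^ m) x)‖ ^ 2 = RCLike.re (⟪R x, R ((S ^ (2 * m)) x)⟫ : ℂ) := by
    rw [← inner_self_eq_norm_sq (𝕜 := ℂ), ← hRR, h1, hRR]
  rw [h2]
  calc RCLike.re (⟪R x, R ((S ^ (2 * m)) x)⟫ : ℂ) ≤ ‖(⟪R x, R ((S ^ (2 * m)) x)⟫ : ℂ)‖ :=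
        RCLike.re_le_norm _
    _ ≤ ‖R x‖ * ‖R ((S ^ (2 * m)) x)‖ := norm_inner_le_norm _ _
    _ = ‖R ((S ^ (2 * m)) x)‖ * ‖R x‖ := mul_comm _ _

lemma norm_R_comp_le (A R S : H →L[ℂ] H)
    (hRR : ∀ u v : H, ⟪A u, v⟫ = ⟪R u, R v⟫)
    (hS : A * S = adjoint S * A) (x : H) :
    ‖R (S x)‖ ≤ ‖S‖ * ‖R x‖ := by
  by_cases hb : ‖R x‖ = 0
  · have h := key_sq A R S hRR hS 1 x
    rw [pow_one, hb, mul_zero] at h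
    have hu : ‖R (S x)‖ = 0 := by nlinarith [norm_nonneg (R (S x))]
    rw [hu, hb, mul_zero]
  · have hb' : 0 < ‖R x‖ := lt_of_le_of_ne (norm_nonneg _) (Ne.symm hb)
    by_cases hS0 : S = 0
    · simp [hS0]
    · have hM : 0 < ‖S‖ := norm_pos_iff.mpr hS0
      have main : ∀ n : ℕ, ‖R (S x)‖ ^ (2 ^ n) * ‖R x‖ ≤
          ‖R ((S ^ (2 ^ n)) x)‖ * ‖R x‖ ^ (2 ^ n) := by
        intro n
        induction n with
        | zero => simp
        | succ n ih =>
          have h1 : (‖R (S x)‖ ^ (2 ^ n) * ‖R x‖) ^ 2 ≤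
              (‖R ((S ^ (2 ^ n)) x)‖ * ‖R x‖ ^ (2 ^ n)) ^ 2 := by
            apply pow_le_pow_left₀ (by positivity) ih
          have h2 := key_sq A R S hRR hS (2 ^ n) x
          rw [← pow_succ'] at h2
          have e1 : (‖R (S x)‖ ^ (2 ^ n)) ^ 2 = ‖R (S x)‖ ^ (2 ^ (n + 1)) := by
            rw [← pow_mul, pow_succ]
          have e2 : (‖R x‖ ^ (2 ^ n)) ^ 2 = ‖R x‖ ^ (2 ^ (n + 1)) := by
            rw [← pow_mul, pow_succ]
          have h3 : ‖R (S x)‖ ^ (2 ^ (n+1)) * ‖R x‖ ^ 2 ≤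
              ‖R ((S ^ 2 ^ n) x)‖ ^ 2 * ‖R x‖ ^ (2 ^ (n+1)) := by
            calc ‖R (S x)‖ ^ (2 ^ (n+1)) * ‖R x‖ ^ 2
                = (‖R (S x)‖ ^ (2 ^ n) * ‖R x‖) ^ 2 := by rw [mul_pow, e1]
              _ ≤ (‖R ((S ^ 2 ^ n) x)‖ * ‖R x‖ ^ 2 ^ n) ^ 2 := h1
              _ = _ := by rw [mul_pow, e2]
          have h4 : ‖R ((S ^ 2 ^ n) x)‖ ^ 2 * ‖R x‖ ^ (2 ^ (n+1)) ≤
              (‖R ((S ^ 2 ^ (n+1)) x)‖ * ‖R x‖) * ‖R x‖ ^ (2 ^ (n+1)) :=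
            mul_le_mul_of_nonneg_right h2 (by positivity)
          have h5 := le_trans h3 h4
          rw [← mul_le_mul_iff_of_pos_right hb']
          calc ‖R (S x)‖ ^ 2 ^ (n+1) * ‖R x‖ * ‖R x‖
              = ‖R (S x)‖ ^ (2 ^ (n+1)) * ‖R x‖ ^ 2 := by ring
            _ ≤ (‖R ((S ^ 2 ^ (n+1)) x)‖ * ‖R x‖) * ‖R x‖ ^ (2 ^ (n+1)) := h5
            _ = ‖R ((S ^ 2 ^ (n+1)) x)‖ * ‖R x‖ ^ 2 ^ (n+1) * ‖R x‖ := by ring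
      by_contra hcon
      push_neg at hcon
      have hq : 1 < ‖R (S x)‖ / (‖S‖ * ‖R x‖) := (one_lt_div (by positivity)).mpr hcon
      obtain ⟨n, hn⟩ := pow_unbounded_of_one_lt (‖R‖ * ‖x‖ / ‖R x‖) hq
      have hDn : (‖R (S x)‖ / (‖S‖ * ‖R x‖)) ^ (2 ^ n) ≤ ‖R‖ * ‖x‖ / ‖R x‖ := by
        have h1 := main n
        have h2 : ‖R ((S ^ (2 ^ n)) x)‖ ≤ ‖R‖ * (‖S‖ ^ (2 ^ n) * ‖x‖) := by
          calc ‖R ((S ^ (2 ^ n)) x)‖ ≤ ‖R‖ * ‖(S ^ (2 ^ n)) x‖ := le_opNorm _ _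
            _ ≤ ‖R‖ * (‖S ^ (2 ^ n)‖ * ‖x‖) := by
                gcongr
                exact le_opNorm _ _
            _ ≤ ‖R‖ * (‖S‖ ^ (2 ^ n) * ‖x‖) := by
                gcongr
                exact norm_pow_le' S (by positivity)
        rw [div_pow, div_le_div_iff₀ (by positivity) hb']
        calc ‖R (S x)‖ ^ (2 ^ n) * ‖R x‖
            ≤ ‖R ((S ^ (2 ^ n)) x)‖ * ‖R x‖ ^ (2 ^ n) := h1
          _ ≤ (‖R‖ * (‖S‖ ^ (2 ^ n) * ‖x‖)) * ‖R x‖ ^ (2 ^ n) := by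
              apply mul_le_mul_of_nonneg_right h2 (by positivity)
          _ = ‖R‖ * ‖x‖ * (‖S‖ * ‖R x‖) ^ (2 ^ n) := by rw [mul_pow]; ring
      have hmono : (‖R (S x)‖ / (‖S‖ * ‖R x‖)) ^ n ≤
          (‖R (S x)‖ / (‖S‖ * ‖R x‖)) ^ (2 ^ n) :=
        pow_le_pow_right₀ hq.le (Nat.le_of_lt (Nat.lt_two_pow_self (n := n)))
      linarith

lemma bound_of_adj (A R T Ts : H →L[ℂ] H) (hAadj : adjoint A = A)
    (hRR : ∀ u v : H, ⟪A u, v⟫ = ⟪R u, R v⟫)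
    (hTs : A * Ts = adjoint T * A) (x : H) :
    ‖R (T x)‖ ≤ Real.sqrt ‖Ts * T‖ * ‖R x‖ := by
  have hT' : A * T = adjoint Ts * A := by
    have := congrArg (fun U : H →L[ℂ] H => star U) hTs
    simp only [star_mul, star_eq_adjoint, hAadj, adjoint_adjoint] at this
    exact this.symm
  have hS : A * (Ts * T) = adjoint (Ts * T) * A := by
    rw [← mul_assoc, hTs, mul_assoc, hT', ← mul_assoc]
    congr 1
    rw [← star_eq_adjoint, ← star_eq_adjoint, ← star_eq_adjoint, star_mul]
  have key : ‖R (T x)‖ ^ 2 ≤ ‖(Ts * T)‖ * ‖R x‖ ^ 2 := by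
    have h1 : ⟪A (T x), T x⟫ = ⟪A ((Ts * T) x), x⟫ := by
      have e1 : A ((Ts * T) x) = (adjoint T) (A (T x)) := by
        have := congrArg (fun U : H →L[ℂ] H => U (T x)) hTs
        simpa [mul_apply] using this
      rw [e1, adjoint_inner_left]
    have h2 : ‖R (T x)‖ ^ 2 = RCLike.re (⟪R ((Ts * T) x), R x⟫ : ℂ) := by
      rw [← inner_self_eq_norm_sq (𝕜 := ℂ), ← hRR, h1, hRR]
    have h3 : RCLike.re (⟪R ((Ts * T) x), R x⟫ : ℂ) ≤ ‖R ((Ts * T) x)‖ * ‖R x‖ := by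
      calc RCLike.re (⟪R ((Ts * T) x), R x⟫ : ℂ) ≤ ‖(⟪R ((Ts * T) x), R x⟫ : ℂ)‖ :=
            RCLike.re_le_norm _
        _ ≤ ‖R ((Ts * T) x)‖ * ‖R x‖ := norm_inner_le_norm _ _
    have h4 := norm_R_comp_le A R (Ts * T) hRR hS x
    have hb0 : (0:ℝ) ≤ ‖R x‖ := norm_nonneg _
    nlinarith
  have h5 : ‖R (T x)‖ ^ 2 ≤ (Real.sqrt ‖Ts * T‖ * ‖R x‖) ^ 2 := by
    rw [mul_pow, Real.sq_sqrt (norm_nonneg _)]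
    exact key
  have := Real.sqrt_le_sqrt h5
  rwa [Real.sqrt_sq (norm_nonneg _), Real.sqrt_sq (by positivity)] at this


lemma opnormA_eq_sup (A R T : H →L[ℂ] H) (hv : ∀ x, vnormA A x = ‖R x‖) :
    opnormA A T = sSup {r : ℝ | ∃ x : H, ‖R x‖ = 1 ∧ r = ‖R (T x)‖} := by
  unfold opnormA
  congr 1
  ext r
  simp only [Set.mem_setOf_eq, hv]

lemma wA_eq_sup (A R T : H →L[ℂ] H) (hv : ∀ x, vnormA A x = ‖R x‖)
    (hi : ∀ x y : H, innA A x y = ⟪R x, R y⟫) :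
    wA A T = sSup {r : ℝ | ∃ x : H, ‖R x‖ = 1 ∧ r = ‖⟪R (T x), R x⟫‖} := by
  unfold wA
  congr 1
  ext r
  simp only [Set.mem_setOf_eq, hv, hi]

lemma opnormA_nonneg (A T : H →L[ℂ] H) : 0 ≤ opnormA A T :=
  Real.sSup_nonneg (by rintro r ⟨x, -, rfl⟩; exact Real.sqrt_nonneg _)

lemma wA_nonneg (A T : H →L[ℂ] H) : 0 ≤ wA A T :=
  Real.sSup_nonneg (by rintro r ⟨x, -, rfl⟩; exact norm_nonneg _)

lemma opnormA_le (A R T : H →L[ℂ] H) (hv : ∀ x, vnormA A x = ‖R x‖) (c : ℝ) (hc : 0 ≤ c)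
    (h : ∀ x : H, ‖R x‖ = 1 → ‖R (T x)‖ ≤ c) : opnormA A T ≤ c := by
  rw [opnormA_eq_sup A R T hv]
  apply Real.sSup_le _ hc
  rintro r ⟨x, hx, rfl⟩
  exact h x hx

lemma wA_le (A R T : H →L[ℂ] H) (hv : ∀ x, vnormA A x = ‖R x‖)
    (hi : ∀ x y : H, innA A x y = ⟪R x, R y⟫) (c : ℝ) (hc : 0 ≤ c)
    (h : ∀ x : H, ‖R x‖ = 1 → ‖⟪R (T x), R x⟫‖ ≤ c) : wA A T ≤ c := by
  rw [wA_eq_sup A R T hv hi]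
  apply Real.sSup_le _ hc
  rintro r ⟨x, hx, rfl⟩
  exact h x hx

lemma norm_le_opnormA_mul (A R T : H →L[ℂ] H) (hv : ∀ x, vnormA A x = ‖R x‖)
    (c : ℝ) (hb : ∀ x, ‖R (T x)‖ ≤ c * ‖R x‖) (x : H) :
    ‖R (T x)‖ ≤ opnormA A T * ‖R x‖ := by
  rw [opnormA_eq_sup A R T hv]
  set s : Set ℝ := {r : ℝ | ∃ y : H, ‖R y‖ = 1 ∧ r = ‖R (T y)‖} with hs
  have hbdd : BddAbove s := by
    refine ⟨c, ?_⟩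
    rintro r ⟨y, hy, rfl⟩
    simpa [hy] using hb y
  by_cases hx : ‖R x‖ = 0
  · have h1 := hb x
    rw [hx, mul_zero] at h1
    have h2 : ‖R (T x)‖ = 0 := le_antisymm h1 (norm_nonneg _)
    rw [h2, hx, mul_zero]
  · have hx' : 0 < ‖R x‖ := lt_of_le_of_ne (norm_nonneg _) (Ne.symm hx)
    set y := ((‖R x‖⁻¹ : ℝ) : ℂ) • x with hy
    have hy1 : ‖R y‖ = 1 := by
      rw [hy, map_smul, norm_smul]
      simp [abs_of_pos (inv_pos.mpr hx'), inv_mul_cancel₀ hx]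
    have h1 : ‖R (T y)‖ ≤ sSup s := le_csSup hbdd ⟨y, hy1, rfl⟩
    have h2 : ‖R (T y)‖ = ‖R x‖⁻¹ * ‖R (T x)‖ := by
      rw [hy, map_smul, map_smul, norm_smul]
      simp [abs_of_pos (inv_pos.mpr hx')]
    have h3 := mul_le_mul_of_nonneg_right h1 hx'.le
    rw [h2] at h3
    calc ‖R (T x)‖ = ‖R x‖⁻¹ * ‖R (T x)‖ * ‖R x‖ := by field_simp
      _ ≤ sSup s * ‖R x‖ := h3

lemma abs_le_wA_mul (A R T : H →L[ℂ] H) (hv : ∀ x, vnormA A x = ‖R x‖)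
    (hi : ∀ x y : H, innA A x y = ⟪R x, R y⟫)
    (c : ℝ) (hb : ∀ x, ‖R (T x)‖ ≤ c * ‖R x‖) (x : H) :
    ‖⟪R (T x), R x⟫‖ ≤ wA A T * (‖R x‖ * ‖R x‖) := by
  rw [wA_eq_sup A R T hv hi]
  set s : Set ℝ := {r : ℝ | ∃ y : H, ‖R y‖ = 1 ∧ r = ‖⟪R (T y), R y⟫‖} with hs
  have hbdd : BddAbove s := by
    refine ⟨c, ?_⟩
    rintro r ⟨y, hy, rfl⟩
    calc ‖⟪R (T y), R y⟫‖ ≤ ‖R (T y)‖ * ‖R y‖ := by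
          exact norm_inner_le_norm _ _
      _ = ‖R (T y)‖ := by rw [hy, mul_one]
      _ ≤ c := by simpa [hy] using hb y
  by_cases hx : ‖R x‖ = 0
  · have h1 : ‖⟪R (T x), R x⟫‖ ≤ ‖R (T x)‖ * ‖R x‖ := by
      exact norm_inner_le_norm _ _
    rw [hx, mul_zero] at h1
    have h2 : ‖⟪R (T x), R x⟫‖ = 0 := le_antisymm h1 (norm_nonneg _)
    rw [h2, hx, mul_zero, mul_zero]
  · have hx' : 0 < ‖R x‖ := lt_of_le_of_ne (norm_nonneg _) (Ne.symm hx)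
    set y := ((‖R x‖⁻¹ : ℝ) : ℂ) • x with hy
    have hy1 : ‖R y‖ = 1 := by
      rw [hy, map_smul, norm_smul]
      simp [abs_of_pos (inv_pos.mpr hx'), inv_mul_cancel₀ hx]
    have h1 : ‖⟪R (T y), R y⟫‖ ≤ sSup s := le_csSup hbdd ⟨y, hy1, rfl⟩
    have h2 : ‖⟪R (T y), R y⟫‖ = ‖R x‖⁻¹ * ‖R x‖⁻¹ * ‖⟪R (T x), R x⟫‖ := by
      rw [hy, map_smul, map_smul, map_smul, inner_smul_left, inner_smul_right]
      rw [norm_mul, norm_mul]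
      simp [Complex.norm_conj, abs_of_pos (inv_pos.mpr hx')]
      ring
    rw [h2] at h1
    have h3 := mul_le_mul_of_nonneg_right h1 (mul_nonneg hx'.le hx'.le)
    calc ‖⟪R (T x), R x⟫‖
        = ‖R x‖⁻¹ * ‖R x‖⁻¹ * ‖⟪R (T x), R x⟫‖ * (‖R x‖ * ‖R x‖) := by
          field_simp
      _ ≤ sSup s * (‖R x‖ * ‖R x‖) := h3

lemma inner_conj_adj (A R T Ts : H →L[ℂ] H) (hAadj : adjoint A = A)
    (hRR : ∀ u v : H, ⟪A u, v⟫ = ⟪R u, R v⟫)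
    (hTs : A * Ts = adjoint T * A) (x y : H) :
    (⟪R (Ts x), R y⟫ : ℂ) = starRingEnd ℂ (⟪R (T y), R x⟫ : ℂ) := by
  have e1 : A (Ts x) = (adjoint T) (A x) := by
    have := congrArg (fun U : H →L[ℂ] H => U x) hTs
    simpa [mul_apply] using this
  calc (⟪R (Ts x), R y⟫ : ℂ) = ⟪A (Ts x), y⟫ := (hRR _ _).symm
    _ = ⟪(adjoint T) (A x), y⟫ := by rw [e1]
    _ = ⟪A x, T y⟫ := adjoint_inner_left _ _ _
    _ = starRingEnd ℂ (⟪T y, A x⟫ : ℂ) := (inner_conj_symm _ _).symm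
    _ = starRingEnd ℂ (⟪A (T y), x⟫ : ℂ) := by rw [← adjoint_inner_left, hAadj]
    _ = starRingEnd ℂ (⟪R (T y), R x⟫ : ℂ) := by rw [hRR]

lemma opnormA_eq_wA (A R S : H →L[ℂ] H)
    (hv : ∀ x, vnormA A x = ‖R x‖) (hi : ∀ x y : H, innA A x y = ⟪R x, R y⟫)
    (hRR : ∀ u v : H, ⟪A u, v⟫ = ⟪R u, R v⟫) (hAadj : adjoint A = A)
    (hS : A * S = adjoint S * A) (c : ℝ) (hb : ∀ x, ‖R (S x)‖ ≤ c * ‖R x‖) :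
    opnormA A S = wA A S := by
  have hw0 : 0 ≤ wA A S := wA_nonneg A S
  have hwp : ∀ z : H, ‖⟪R (S z), R z⟫‖ ≤ wA A S * (‖R z‖ * ‖R z‖) :=
    abs_le_wA_mul A R S hv hi c hb
  have hre : ∀ x y : H, (⟪R (S x), R y⟫ : ℂ).re ≤ wA A S / 2 * (‖R x‖ * ‖R x‖ + ‖R y‖ * ‖R y‖) := by
    intro x y
    have hsym : (⟪R (S y), R x⟫ : ℂ) = starRingEnd ℂ (⟪R (S x), R y⟫ : ℂ) :=
      inner_conj_adj A R S S hAadj hRR hS y x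
    have hq1 : (⟪R (S (x+y)), R (x+y)⟫ : ℂ).re ≤ wA A S * (‖R (x+y)‖ * ‖R (x+y)‖) :=
      le_trans (Complex.re_le_norm _) (hwp _)
    have hq2 : -(wA A S * (‖R (x-y)‖ * ‖R (x-y)‖)) ≤ (⟪R (S (x-y)), R (x-y)⟫ : ℂ).re := by
      have h1 := hwp (x - y)
      have h2 := Complex.abs_re_le_norm (⟪R (S (x-y)), R (x-y)⟫ : ℂ)
      have h3 := neg_abs_le ((⟪R (S (x-y)), R (x-y)⟫ : ℂ).re)
      linarith
    have hpol : (⟪R (S (x+y)), R (x+y)⟫ : ℂ).re - (⟪R (S (x-y)), R (x-y)⟫ : ℂ).re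
        = 4 * (⟪R (S x), R y⟫ : ℂ).re := by
      simp only [map_add, map_sub, inner_add_left, inner_add_right,
        inner_sub_left, inner_sub_right, hsym]
      simp only [Complex.add_re, Complex.sub_re, Complex.conj_re]
      ring
    have hpar : ‖R (x+y)‖ * ‖R (x+y)‖ + ‖R (x-y)‖ * ‖R (x-y)‖
        = 2 * (‖R x‖ * ‖R x‖ + ‖R y‖ * ‖R y‖) := by
      have := parallelogram_law_with_norm ℂ (R x) (R y)
      simpa [map_add, map_sub, sq] using this
    have hpar' : wA A S * (‖R (x+y)‖ * ‖R (x+y)‖) + wA A S * (‖R (x-y)‖ * ‖R (x-y)‖)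
        = wA A S * (2 * (‖R x‖ * ‖R x‖ + ‖R y‖ * ‖R y‖)) := by
      rw [← mul_add, hpar]
    linarith
  apply le_antisymm
  · rw [opnormA_eq_sup A R S hv]
    apply Real.sSup_le _ hw0
    rintro r ⟨x, hx, rfl⟩
    by_cases h0 : ‖R (S x)‖ = 0
    · rw [h0]; exact hw0
    · have h0' : 0 < ‖R (S x)‖ := lt_of_le_of_ne (norm_nonneg _) (Ne.symm h0)
      set y := ((‖R (S x)‖⁻¹ : ℝ) : ℂ) • (S x) with hy
      have hRy : R y = ((‖R (S x)‖⁻¹ : ℝ) : ℂ) • R (S x) := by rw [hy, map_smul]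
      have hy1 : ‖R y‖ = 1 := by
        rw [hRy, norm_smul]
        simp [abs_of_pos (inv_pos.mpr h0'), inv_mul_cancel₀ h0]
      have hval : (⟪R (S x), R y⟫ : ℂ).re = ‖R (S x)‖ := by
        rw [hRy, inner_smul_right, inner_self_eq_norm_sq_to_K]
        push_cast
        rw [Complex.mul_re]
        simp
        field_simp
        norm_cast
      have h2 := hre x y
      rw [hx, hy1, hval] at h2
      linarith
  · rw [wA_eq_sup A R S hv hi]
    apply Real.sSup_le _ (opnormA_nonneg A S)
    rintro r ⟨x, hx, rfl⟩
    calc ‖⟪R (S x), R x⟫‖ ≤ ‖R (S x)‖ * ‖R x‖ := by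
          exact norm_inner_le_norm _ _
      _ = ‖R (S x)‖ := by rw [hx, mul_one]
      _ ≤ opnormA A S * ‖R x‖ := norm_le_opnormA_mul A R S hv c hb x
      _ = opnormA A S := by rw [hx, mul_one]

lemma opnormA_smul_unit (A R T : H →L[ℂ] H) (hv : ∀ x, vnormA A x = ‖R x‖)
    (c : ℂ) (hc : ‖c‖ = 1) : opnormA A (c • T) = opnormA A T := by
  rw [opnormA_eq_sup A R (c • T) hv, opnormA_eq_sup A R T hv]
  congr 1
  ext r
  constructor
  · rintro ⟨x, hx, rfl⟩
    exact ⟨x, hx, by simp [ContinuousLinearMap.smul_apply, map_smul, norm_smul, hc]⟩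
  · rintro ⟨x, hx, rfl⟩
    exact ⟨x, hx, by simp [ContinuousLinearMap.smul_apply, map_smul, norm_smul, hc]⟩

end Stmt4Aux

theorem stmt4 (A T Ts : H →L[ℂ] H) (hA : A.IsPositive) (hTs : IsAAdjoint A T Ts) :
    wA A T = opnormA A T / 2 ↔
      ∀ θ : ℝ,
        opnormA A (ReA (Complex.exp ((θ : ℂ) * Complex.I) • T)
            (Complex.exp (-(θ : ℂ) * Complex.I) • Ts)) = opnormA A T / 2 ∧
        opnormA A (ImA (Complex.exp ((θ : ℂ) * Complex.I) • T)
            (Complex.exp (-(θ : ℂ) * Complex.I) • Ts)) = opnormA A T / 2 := by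
  classical
  have h0 : (0 : H →L[ℂ] H) ≤ A := (ContinuousLinearMap.nonneg_iff_isPositive A).mpr hA
  set R := CFC.sqrt A with hRdef
  have hsq : R ^ 2 = A := CFC.sq_sqrt A h0
  have hRsa : IsSelfAdjoint R :=
    ((ContinuousLinearMap.nonneg_iff_isPositive R).mp (CFC.sqrt_nonneg A)).isSelfAdjoint
  have hRadj : ContinuousLinearMap.adjoint R = R := by
    rw [← ContinuousLinearMap.star_eq_adjoint]; exact hRsa
  have hRR : ∀ u v : H, (inner ℂ (A u) v : ℂ) = inner ℂ (R u) (R v) := by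
    intro u v
    rw [← hsq, sq, ContinuousLinearMap.mul_apply]
    conv_lhs => rw [hRadj.symm]
    rw [ContinuousLinearMap.adjoint_inner_left, hRadj]
  have hAadj : ContinuousLinearMap.adjoint A = A := by
    rw [← ContinuousLinearMap.star_eq_adjoint]; exact hA.isSelfAdjoint
  have hv : ∀ x : H, vnormA A x = ‖R x‖ := by
    intro x
    unfold vnormA innA
    rw [hRR]
    have h1 : (inner ℂ (R x) (R x) : ℂ) = ((‖R x‖ ^ 2 : ℝ) : ℂ) := by
      exact_mod_cast inner_self_eq_norm_sq_to_K (𝕜 := ℂ) (R x)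
    rw [h1, Complex.ofReal_re, Real.sqrt_sq (norm_nonneg _)]
  have hi : ∀ x y : H, innA A x y = inner ℂ (R x) (R y) := by
    intro x y; unfold innA; exact hRR x y
  have hTs' : A * Ts = ContinuousLinearMap.adjoint T * A := hTs
  have hT' : A * T = ContinuousLinearMap.adjoint Ts * A := by
    have h1 := congrArg (fun U : H →L[ℂ] H => star U) hTs'
    simp only [star_mul, ContinuousLinearMap.star_eq_adjoint, hAadj,
      ContinuousLinearMap.adjoint_adjoint] at h1
    exact h1.symm
  set cT := Real.sqrt ‖Ts * T‖ with hcT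
  set cTs := Real.sqrt ‖T * Ts‖ with hcTs
  have hcT0 : 0 ≤ cT := Real.sqrt_nonneg _
  have hcTs0 : 0 ≤ cTs := Real.sqrt_nonneg _
  have hbT : ∀ x, ‖R (T x)‖ ≤ cT * ‖R x‖ := Stmt4Aux.bound_of_adj A R T Ts hAadj hRR hTs'
  have hbTs : ∀ x, ‖R (Ts x)‖ ≤ cTs * ‖R x‖ := Stmt4Aux.bound_of_adj A R Ts T hAadj hRR hT'
  set G : ℂ → H →L[ℂ] H := fun a => a • T + (starRingEnd ℂ a) • Ts with hG
  have hGapp : ∀ (a : ℂ) (x : H), (G a) x = a • T x + (starRingEnd ℂ a) • Ts x := by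
    intro a x; rw [hG]; simp
  have hGsa : ∀ a : ℂ, A * (G a) = ContinuousLinearMap.adjoint (G a) * A := by
    intro a
    rw [hG]
    have hadj : ContinuousLinearMap.adjoint (a • T + (starRingEnd ℂ a) • Ts)
        = (starRingEnd ℂ a) • ContinuousLinearMap.adjoint T
          + a • ContinuousLinearMap.adjoint Ts := by
      rw [← ContinuousLinearMap.star_eq_adjoint, star_add, star_smul, star_smul,
        ContinuousLinearMap.star_eq_adjoint, ContinuousLinearMap.star_eq_adjoint]
      simp [RCLike.star_def, Complex.conj_conj]
    simp only []
    rw [hadj, mul_add, add_mul, mul_smul_comm, mul_smul_comm, smul_mul_assoc, smul_mul_assoc,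
      hT', hTs']
    abel
  have hGb : ∀ (a : ℂ) (x : H), ‖R ((G a) x)‖ ≤ ‖a‖ * (cT + cTs) * ‖R x‖ := by
    intro a x
    rw [hGapp]
    rw [map_add, map_smul, map_smul]
    calc ‖a • R (T x) + (starRingEnd ℂ a) • R (Ts x)‖
        ≤ ‖a • R (T x)‖ + ‖(starRingEnd ℂ a) • R (Ts x)‖ := norm_add_le _ _
      _ = ‖a‖ * ‖R (T x)‖ + ‖a‖ * ‖R (Ts x)‖ := by
          rw [norm_smul, norm_smul, RCLike.norm_conj]
      _ ≤ ‖a‖ * (cT * ‖R x‖) + ‖a‖ * (cTs * ‖R x‖) := by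
          gcongr
          · exact hbT x
          · exact hbTs x
      _ = ‖a‖ * (cT + cTs) * ‖R x‖ := by ring
  have hTsconj : ∀ x y : H, (inner ℂ (R (Ts x)) (R y) : ℂ)
      = starRingEnd ℂ (inner ℂ (R (T y)) (R x)) :=
    Stmt4Aux.inner_conj_adj A R T Ts hAadj hRR hTs'
  have hGval : ∀ (a : ℂ) (x : H), (inner ℂ (R ((G a) x)) (R x) : ℂ)
      = starRingEnd ℂ a * (inner ℂ (R (T x)) (R x))
        + a * starRingEnd ℂ (inner ℂ (R (T x)) (R x)) := by
    intro a x
    rw [hGapp, map_add, map_smul, map_smul, inner_add_left, inner_smul_left, inner_smul_left,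
      hTsconj x x, Complex.conj_conj]
  have hzle : ∀ x : H, ‖R x‖ = 1 → ‖inner ℂ (R (T x)) (R x)‖ ≤ wA A T := by
    intro x hx
    have h1 := Stmt4Aux.abs_le_wA_mul A R T hv hi cT hbT x
    rwa [hx, mul_one, mul_one] at h1
  have hGw : ∀ a : ℂ, wA A (G a) ≤ 2 * ‖a‖ * wA A T := by
    intro a
    apply Stmt4Aux.wA_le A R (G a) hv hi _
      (mul_nonneg (by positivity) (Stmt4Aux.wA_nonneg A T))
    intro x hx
    rw [hGval a x]
    calc ‖starRingEnd ℂ a * (inner ℂ (R (T x)) (R x))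
          + a * starRingEnd ℂ (inner ℂ (R (T x)) (R x))‖
        ≤ ‖starRingEnd ℂ a * (inner ℂ (R (T x)) (R x))‖
          + ‖a * starRingEnd ℂ (inner ℂ (R (T x)) (R x))‖ := by
          exact norm_add_le _ _
      _ = 2 * ‖a‖ * ‖inner ℂ (R (T x)) (R x)‖ := by
          rw [norm_mul, norm_mul, Complex.norm_conj, Complex.norm_conj]
          ring
      _ ≤ 2 * ‖a‖ * wA A T := by
          have := hzle x hx
          have h2 : (0:ℝ) ≤ 2 * ‖a‖ := by positivity
          nlinarith
  have hGop : ∀ a : ℂ, opnormA A (G a) = wA A (G a) := by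
    intro a
    exact Stmt4Aux.opnormA_eq_wA A R (G a) hv hi hRR hAadj (hGsa a) (‖a‖ * (cT + cTs)) (hGb a)
  have hReG : ∀ c : ℂ, ReA (c • T) ((starRingEnd ℂ c) • Ts) = G ((2:ℂ)⁻¹ * c) := by
    intro c
    show (2 : ℂ)⁻¹ • (c • T + (starRingEnd ℂ c) • Ts)
      = ((2:ℂ)⁻¹ * c) • T + (starRingEnd ℂ ((2:ℂ)⁻¹ * c)) • Ts
    simp only [map_mul, map_inv₀, map_ofNat]
    module
  have hImG : ∀ c : ℂ, ImA (c • T) ((starRingEnd ℂ c) • Ts)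
      = G ((2:ℂ)⁻¹ * -Complex.I * c) := by
    intro c
    show (2 * Complex.I)⁻¹ • (c • T - (starRingEnd ℂ c) • Ts)
      = ((2:ℂ)⁻¹ * -Complex.I * c) • T
        + (starRingEnd ℂ ((2:ℂ)⁻¹ * -Complex.I * c)) • Ts
    have hinv : ((2 : ℂ) * Complex.I)⁻¹ = (2:ℂ)⁻¹ * -Complex.I := by
      rw [mul_inv, Complex.inv_I]
    rw [hinv]
    simp only [map_mul, map_inv₀, map_ofNat, map_neg, Complex.conj_I]
    module
  have hdec : ∀ (c : ℂ) (x : H), c • T x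
      = (G ((2:ℂ)⁻¹ * c)) x + Complex.I • ((G ((2:ℂ)⁻¹ * -Complex.I * c)) x) := by
    intro c x
    rw [hGapp, hGapp]
    simp only [map_mul, map_inv₀, map_ofNat, map_neg, Complex.conj_I]
    match_scalars
    · linear_combination (c / 2) * Complex.I_sq
    · linear_combination (-(starRingEnd ℂ c) / 2) * Complex.I_sq
  have hnorm1 : ∀ c : ℂ, ‖c‖ = 1 → ‖(2:ℂ)⁻¹ * c‖ = 1/2 := by
    intro c hc
    rw [norm_mul, hc, mul_one, norm_inv]
    norm_num
  have hnorm2 : ∀ c : ℂ, ‖c‖ = 1 → ‖(2:ℂ)⁻¹ * -Complex.I * c‖ = 1/2 := by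
    intro c hc
    rw [norm_mul, norm_mul, hc, mul_one, norm_neg, Complex.norm_I, norm_inv, mul_one]
    norm_num
  have htri : ∀ c : ℂ, ‖c‖ = 1 → opnormA A T
      ≤ opnormA A (G ((2:ℂ)⁻¹ * c)) + opnormA A (G ((2:ℂ)⁻¹ * -Complex.I * c)) := by
    intro c hc
    have hsm : opnormA A (c • T) = opnormA A T :=
      Stmt4Aux.opnormA_smul_unit A R T hv c hc
    rw [← hsm]
    apply Stmt4Aux.opnormA_le A R (c • T) hv _
      (add_nonneg (Stmt4Aux.opnormA_nonneg A _) (Stmt4Aux.opnormA_nonneg A _))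
    intro x hx
    have hpt1 := Stmt4Aux.norm_le_opnormA_mul A R (G ((2:ℂ)⁻¹ * c)) hv
      (‖((2:ℂ)⁻¹ * c)‖ * (cT + cTs)) (hGb _) x
    have hpt2 := Stmt4Aux.norm_le_opnormA_mul A R (G ((2:ℂ)⁻¹ * -Complex.I * c)) hv
      (‖((2:ℂ)⁻¹ * -Complex.I * c)‖ * (cT + cTs)) (hGb _) x
    rw [hx, mul_one] at hpt1 hpt2
    calc ‖R ((c • T) x)‖ = ‖R ((G ((2:ℂ)⁻¹ * c)) x) + Complex.I • R ((G ((2:ℂ)⁻¹ * -Complex.I * c)) x)‖ := by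
          rw [ContinuousLinearMap.smul_apply]
          rw [show (R ((G ((2:ℂ)⁻¹ * c)) x) + Complex.I • R ((G ((2:ℂ)⁻¹ * -Complex.I * c)) x))
            = R ((G ((2:ℂ)⁻¹ * c)) x + Complex.I • (G ((2:ℂ)⁻¹ * -Complex.I * c)) x) from by
              rw [map_add, map_smul]]
          rw [← hdec c x]
      _ ≤ ‖R ((G ((2:ℂ)⁻¹ * c)) x)‖ + ‖Complex.I • R ((G ((2:ℂ)⁻¹ * -Complex.I * c)) x)‖ :=
          norm_add_le _ _
      _ = ‖R ((G ((2:ℂ)⁻¹ * c)) x)‖ + ‖R ((G ((2:ℂ)⁻¹ * -Complex.I * c)) x)‖ := by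
          rw [norm_smul, Complex.norm_I, one_mul]
      _ ≤ opnormA A (G ((2:ℂ)⁻¹ * c)) + opnormA A (G ((2:ℂ)⁻¹ * -Complex.I * c)) := by
          exact add_le_add hpt1 hpt2
  have hexpconj : ∀ θ : ℝ, Complex.exp (-(θ : ℂ) * Complex.I)
      = starRingEnd ℂ (Complex.exp ((θ : ℂ) * Complex.I)) := by
    intro θ
    rw [← Complex.exp_conj]
    congr 1
    simp [Complex.conj_ofReal]
  have hexpnorm : ∀ θ : ℝ, ‖Complex.exp ((θ : ℂ) * Complex.I)‖ = 1 := by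
    intro θ
    rw [Complex.norm_exp_ofReal_mul_I]
  constructor
  · intro hw θ
    set c := Complex.exp ((θ : ℂ) * Complex.I) with hc
    rw [hexpconj θ, hReG c, hImG c]
    have hc1 : ‖c‖ = 1 := hexpnorm θ
    have e1 : opnormA A (G ((2:ℂ)⁻¹ * c)) = wA A (G ((2:ℂ)⁻¹ * c)) := hGop _
    have e2 : wA A (G ((2:ℂ)⁻¹ * c)) ≤ wA A T := by
      have := hGw ((2:ℂ)⁻¹ * c)
      rw [hnorm1 c hc1] at this
      linarith
    have e3 : opnormA A (G ((2:ℂ)⁻¹ * -Complex.I * c)) = wA A (G ((2:ℂ)⁻¹ * -Complex.I * c)) := hGop _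
    have e4 : wA A (G ((2:ℂ)⁻¹ * -Complex.I * c)) ≤ wA A T := by
      have := hGw ((2:ℂ)⁻¹ * -Complex.I * c)
      rw [hnorm2 c hc1] at this
      linarith
    have e5 := htri c hc1
    constructor
    · linarith
    · linarith
  · intro hθ
    have h00 := (hθ 0).1
    have h00' : opnormA A (G ((2:ℂ)⁻¹ * 1)) = opnormA A T / 2 := by
      rw [← hReG 1]
      have e : ReA ((1:ℂ) • T) ((starRingEnd ℂ (1:ℂ)) • Ts) = ReA (Complex.exp (((0:ℝ) : ℂ) * Complex.I) • T) (Complex.exp (-((0:ℝ) : ℂ) * Complex.I) • Ts) := by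
        norm_num
      rw [e]
      exact h00
    apply le_antisymm
    · apply Stmt4Aux.wA_le A R T hv hi _
        (div_nonneg (Stmt4Aux.opnormA_nonneg A T) (by norm_num))
      intro x hx
      set z : ℂ := inner ℂ (R (T x)) (R x) with hz
      set c := Complex.exp ((z.arg : ℂ) * Complex.I) with hcdef
      have hc1 : ‖c‖ = 1 := hexpnorm _
      have hPeq : opnormA A (G ((2:ℂ)⁻¹ * c)) = opnormA A T / 2 := by
        have := (hθ z.arg).1
        rw [hexpconj z.arg, hReG c] at this
        exact this
      have habs : starRingEnd ℂ c * z = ((‖z‖ : ℝ) : ℂ) := by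
        have h1 := Complex.norm_mul_exp_arg_mul_I z
        rw [← hcdef] at h1
        calc starRingEnd ℂ c * z = starRingEnd ℂ c * (((‖z‖ : ℝ) : ℂ) * c) := by
              rw [h1]
          _ = ((‖z‖ : ℝ) : ℂ) * (c * starRingEnd ℂ c) := by ring
          _ = ((‖z‖ : ℝ) : ℂ) * ((Complex.normSq c : ℝ) : ℂ) := by
              rw [Complex.mul_conj]
          _ = ((‖z‖ : ℝ) : ℂ) := by
              have habsc : ‖c‖ = 1 := by rw [hc1]
              rw [Complex.normSq_eq_norm_sq, habsc]
              norm_num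
      have habs' : c * starRingEnd ℂ z = ((‖z‖ : ℝ) : ℂ) := by
        have h1 := congrArg (starRingEnd ℂ) habs
        simpa [map_mul, Complex.conj_conj, Complex.conj_ofReal, mul_comm] using h1
      have hval : (inner ℂ (R ((G ((2:ℂ)⁻¹ * c)) x)) (R x) : ℂ) = ((‖z‖ : ℝ) : ℂ) := by
        rw [hGval, ← hz]
        simp only [map_mul, map_inv₀, map_ofNat]
        linear_combination (2:ℂ)⁻¹ * habs + (2:ℂ)⁻¹ * habs'
      have hpt := Stmt4Aux.norm_le_opnormA_mul A R (G ((2:ℂ)⁻¹ * c)) hv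
        (‖((2:ℂ)⁻¹ * c)‖ * (cT + cTs)) (hGb _) x
      rw [hx, mul_one] at hpt
      calc ‖z‖ = ‖((‖z‖ : ℝ) : ℂ)‖ := by
            rw [Complex.norm_real, Real.norm_eq_abs]
            exact (_root_.abs_of_nonneg (norm_nonneg z)).symm
        _ = ‖inner ℂ (R ((G ((2:ℂ)⁻¹ * c)) x)) (R x)‖ := by rw [hval]
        _ ≤ ‖R ((G ((2:ℂ)⁻¹ * c)) x)‖ * ‖R x‖ := by
            exact norm_inner_le_norm _ _
        _ = ‖R ((G ((2:ℂ)⁻¹ * c)) x)‖ := by rw [hx, mul_one]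
        _ ≤ opnormA A (G ((2:ℂ)⁻¹ * c)) := hpt
        _ = opnormA A T / 2 := hPeq
    · have e1 : opnormA A (G ((2:ℂ)⁻¹ * 1)) = wA A (G ((2:ℂ)⁻¹ * 1)) := hGop _
      have e2 : wA A (G ((2:ℂ)⁻¹ * 1)) ≤ wA A T := by
        have := hGw ((2:ℂ)⁻¹ * 1)
        rw [hnorm1 1 (by norm_num)] at this
        linarith
      linarith
end
end

section
/- Let T be a bounded linear operator on H admitting an A-adjoint T♯. Then w_A(T) ≥ √( (1/4)‖T♯∘T + T∘T♯‖_A + (1/2)| ‖Re_A(T)‖_A² − ‖Im_A(T)‖_A² | ). -/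
noncomputable section

open Complex ContinuousLinearMap

variable {H : Type*} [NormedAddCommGroup H] [InnerProductSpace ℂ H] [CompleteSpace H]

local notation "⟪" x ", " y "⟫" => @inner ℂ _ _ x y

lemma aux_innA_RR {A R : H →L[ℂ] H} (hR : IsSelfAdjoint R) (hRA : R * R = A) (u v : H) :
    innA A u v = ⟪R u, R v⟫ := by
  have hs := (isSelfAdjoint_iff_isSymmetric).mp hR
  rw [innA, ← hRA, mul_def, comp_apply]
  exact hs (R u) v

lemma aux_vnormA_R {A R : H →L[ℂ] H} (hR : IsSelfAdjoint R) (hRA : R * R = A) (u : H) :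
    vnormA A u = ‖R u‖ := by
  rw [vnormA, aux_innA_RR hR hRA, ← RCLike.re_to_complex, inner_self_eq_norm_sq (𝕜 := ℂ)]
  exact Real.sqrt_sq (norm_nonneg _)

lemma aux_pow_comm {A S : H →L[ℂ] H} (hS : A * S = adjoint S * A) (n : ℕ) :
    A * S ^ n = (adjoint S) ^ n * A := by
  induction n with
  | zero => simp
  | succ n ih => rw [pow_succ, ← mul_assoc, ih, mul_assoc, hS, ← mul_assoc, ← pow_succ]

lemma aux_inner_pow {A R S : H →L[ℂ] H} (hR : IsSelfAdjoint R) (hRA : R * R = A)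
    (hS : A * S = adjoint S * A) (n : ℕ) (x : H) :
    ⟪A ((S ^ n) x), (S ^ n) x⟫ = ⟪R x, R ((S ^ (2 * n)) x)⟫ := by
  have h1 : A ((S ^ n) x) = ((adjoint S) ^ n) (A x) := by
    have := aux_pow_comm hS n
    calc A ((S ^ n) x) = (A * S ^ n) x := rfl
    _ = ((adjoint S) ^ n * A) x := by rw [this]
    _ = ((adjoint S) ^ n) (A x) := rfl
  have h2 : (adjoint S) ^ n = adjoint (S ^ n) := by
    rw [← star_eq_adjoint, ← star_eq_adjoint, ← star_pow]
  rw [h1, h2, adjoint_inner_left]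
  have h3 : (S ^ n) ((S ^ n) x) = (S ^ (2 * n)) x := by
    rw [two_mul, pow_add]; rfl
  rw [h3]
  exact aux_innA_RR hR hRA x ((S ^ (2*n)) x)

/-- Core lemma: an `A`-selfadjoint operator `S` satisfies `‖R (S x)‖ ≤ ‖S‖ * ‖R x‖`. -/
lemma aux_selfadj_bound {A R S : H →L[ℂ] H} (hR : IsSelfAdjoint R) (hRA : R * R = A)
    (hS : A * S = adjoint S * A) (x : H) : ‖R (S x)‖ ≤ ‖S‖ * ‖R x‖ := by
  set c : ℕ → ℝ := fun k => ‖R ((S ^ (2 ^ k)) x)‖ with hc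
  have hc0 : c 0 = ‖R (S x)‖ := by simp [hc]
  -- the recursive step
  have hstep : ∀ k, c k ^ 2 ≤ ‖R x‖ * c (k + 1) := by
    intro k
    have h1 : (c k) ^ 2 = (⟪A ((S ^ (2 ^ k)) x), (S ^ (2 ^ k)) x⟫).re := by
      rw [show ⟪A ((S ^ (2^k)) x), (S ^ (2^k)) x⟫ = ⟪R ((S ^ (2^k)) x), R ((S ^ (2^k)) x)⟫ from
        aux_innA_RR hR hRA _ _, ← RCLike.re_to_complex, inner_self_eq_norm_sq (𝕜 := ℂ)]
    have h2 := aux_inner_pow hR hRA hS (2 ^ k) x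
    rw [h1, h2]
    have h3 : 2 * 2 ^ k = 2 ^ (k + 1) := by ring
    rw [h3]
    calc (⟪R x, R ((S ^ (2 ^ (k+1))) x)⟫).re ≤ ‖(⟪R x, R ((S ^ (2 ^ (k+1))) x)⟫ : ℂ)‖ :=
          Complex.re_le_norm _
      _ ≤ ‖R x‖ * ‖R ((S ^ (2 ^ (k+1))) x)‖ := norm_inner_le_norm _ _
  -- crude growth bound
  have hcrude : ∀ k, c k ≤ ‖R‖ * ‖S‖ ^ (2 ^ k) * ‖x‖ := by
    intro k
    have h1 : ‖(S ^ (2 ^ k)) x‖ ≤ ‖S‖ ^ (2 ^ k) * ‖x‖ := by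
      calc ‖(S ^ (2 ^ k)) x‖ ≤ ‖S ^ (2 ^ k)‖ * ‖x‖ := (S ^ (2 ^ k)).le_opNorm x
        _ ≤ ‖S‖ ^ (2 ^ k) * ‖x‖ :=
            mul_le_mul_of_nonneg_right (norm_pow_le' S (pow_pos two_pos k)) (norm_nonneg x)
    calc c k ≤ ‖R‖ * ‖(S ^ (2 ^ k)) x‖ := R.le_opNorm _
      _ ≤ ‖R‖ * (‖S‖ ^ (2 ^ k) * ‖x‖) := mul_le_mul_of_nonneg_left h1 (norm_nonneg _)
      _ = ‖R‖ * ‖S‖ ^ (2 ^ k) * ‖x‖ := by ring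
  have hcnonneg : ∀ k, 0 ≤ c k := fun k => norm_nonneg _
  set m := ‖R x‖ with hm
  have hmnn : 0 ≤ m := norm_nonneg _
  rcases eq_or_lt_of_le hmnn with hm0 | hmpos
  · -- m = 0
    have := hstep 0
    rw [← hm0] at this
    have h0 : c 0 ^ 2 ≤ 0 := by linarith
    have : c 0 = 0 := by nlinarith [hcnonneg 0]
    rw [← hc0, this, ← hm0, mul_zero]
  · -- m > 0
    rcases eq_or_lt_of_le (norm_nonneg S) with hS0 | hSpos
    · have : S = 0 := by rwa [eq_comm, norm_eq_zero] at hS0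
      simp [this]
    -- induction: c 0 ^ (2 ^ n) * m ≤ m ^ (2 ^ n) * c n
    have hind : ∀ n, c 0 ^ (2 ^ n) * m ≤ m ^ (2 ^ n) * c n := by
      intro n
      induction n with
      | zero => simp [mul_comm]
      | succ n ih =>
        have e1 : c 0 ^ (2 ^ (n+1)) = (c 0 ^ (2 ^ n)) ^ 2 := by rw [← pow_mul, ← pow_succ]
        have e2 : m ^ (2 ^ (n+1)) = (m ^ (2 ^ n)) ^ 2 := by rw [← pow_mul, ← pow_succ]
        have h3 : (c n) ^ 2 ≤ m * c (n + 1) := hstep n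
        have hXnn : 0 ≤ c 0 ^ (2 ^ n) * m := by positivity
        have hXY : (c 0 ^ (2 ^ n) * m) ^ 2 ≤ (m ^ (2 ^ n) * c n) ^ 2 :=
          pow_le_pow_left₀ hXnn ih 2
        have h7 : c 0 ^ (2 ^ (n+1)) * m ^ 2 ≤ m ^ (2 ^ (n+1)) * (m * c (n + 1)) := by
          have h8 := mul_le_mul_of_nonneg_left h3 (pow_nonneg hmnn (2 ^ (n+1)))
          calc c 0 ^ (2 ^ (n+1)) * m ^ 2 = (c 0 ^ (2 ^ n) * m) ^ 2 := by rw [e1]; ring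
            _ ≤ (m ^ (2 ^ n) * c n) ^ 2 := hXY
            _ = m ^ (2 ^ (n+1)) * (c n) ^ 2 := by rw [e2]; ring
            _ ≤ m ^ (2 ^ (n+1)) * (m * c (n + 1)) := h8
        refine le_of_mul_le_mul_right ?_ hmpos
        nlinarith [h7]
    -- conclude by contradiction
    rw [← hc0]
    by_contra hcon
    push_neg at hcon
    set q := c 0 / (‖S‖ * m) with hq
    have hSm : 0 < ‖S‖ * m := mul_pos hSpos hmpos
    have hq1 : 1 < q := (one_lt_div hSm).mpr hcon
    obtain ⟨n, hn⟩ := pow_unbounded_of_one_lt (‖R‖ * ‖x‖ / m) hq1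
    have hqn : q ^ n ≤ q ^ (2 ^ n) := pow_le_pow_right₀ hq1.le (Nat.lt_two_pow_self).le
    have hkey : q ^ (2 ^ n) * m ≤ ‖R‖ * ‖x‖ := by
      have h6 : c 0 ^ (2 ^ n) * m ≤ m ^ (2 ^ n) * (‖R‖ * ‖S‖ ^ (2 ^ n) * ‖x‖) := by
        calc c 0 ^ (2 ^ n) * m ≤ m ^ (2 ^ n) * c n := hind n
          _ ≤ m ^ (2 ^ n) * (‖R‖ * ‖S‖ ^ (2 ^ n) * ‖x‖) := by
              gcongr
              exact hcrude n
      have hc0q : c 0 = q * (‖S‖ * m) := by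
        rw [hq, div_mul_cancel₀ _ hSm.ne']
      rw [hc0q, mul_pow] at h6
      have h7 : (‖S‖ * m) ^ (2 ^ n) = ‖S‖ ^ (2 ^ n) * m ^ (2 ^ n) := mul_pow _ _ _
      rw [h7] at h6
      have h8 : 0 < ‖S‖ ^ (2 ^ n) * m ^ (2 ^ n) := by positivity
      nlinarith [h6, h8]
    have : ‖R‖ * ‖x‖ / m < q ^ (2 ^ n) := lt_of_lt_of_le hn hqn
    rw [div_lt_iff₀ hmpos] at this
    linarith

/-- If `Ts` is an `A`-adjoint of `T` then `‖R (T x)‖ ≤ √‖Ts * T‖ * ‖R x‖`. -/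
lemma aux_T_bound {A R T Ts : H →L[ℂ] H} (hR : IsSelfAdjoint R) (hRA : R * R = A)
    (hA : IsSelfAdjoint A) (h1 : A * Ts = adjoint T * A) (x : H) :
    ‖R (T x)‖ ≤ Real.sqrt ‖Ts * T‖ * ‖R x‖ := by
  -- A * T = adjoint Ts * A
  have h2 : A * T = adjoint Ts * A := by
    have h := congrArg star h1
    simp only [star_mul, hA.star_eq, ← star_eq_adjoint, star_star] at h
    rw [star_eq_adjoint] at h
    exact h.symm
  -- S := Ts * T is A-selfadjoint
  have hS : A * (Ts * T) = adjoint (Ts * T) * A := by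
    have hadj : adjoint (Ts * T) = adjoint T * adjoint Ts := by
      rw [← star_eq_adjoint, star_mul, star_eq_adjoint, star_eq_adjoint]
    rw [hadj, ← mul_assoc, h1, mul_assoc, h2, ← mul_assoc]
  have hb := aux_selfadj_bound hR hRA hS x
  have hkey : ‖R (T x)‖ ^ 2 ≤ ‖Ts * T‖ * ‖R x‖ ^ 2 := by
    have e1 : (‖R (T x)‖ : ℝ) ^ 2 = (⟪A (T x), T x⟫).re := by
      rw [show ⟪A (T x), T x⟫ = ⟪R (T x), R (T x)⟫ from aux_innA_RR hR hRA _ _,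
        ← RCLike.re_to_complex, inner_self_eq_norm_sq (𝕜 := ℂ)]
    have e2 : ⟪A (T x), T x⟫ = ⟪R x, R ((Ts * T) x)⟫ := by
      have : A (T x) = (adjoint Ts) (A x) := by
        calc A (T x) = (A * T) x := rfl
          _ = (adjoint Ts * A) x := by rw [h2]
          _ = (adjoint Ts) (A x) := rfl
      rw [this, adjoint_inner_left]
      have : Ts (T x) = (Ts * T) x := rfl
      rw [this]
      exact aux_innA_RR hR hRA x _
    have e3 : (⟪R x, R ((Ts * T) x)⟫).re ≤ ‖R x‖ * ‖R ((Ts * T) x)‖ :=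
      le_trans (Complex.re_le_norm _)
        (by exact norm_inner_le_norm _ _)
    have e4 : ‖R x‖ * ‖R ((Ts * T) x)‖ ≤ ‖R x‖ * (‖Ts * T‖ * ‖R x‖) :=
      mul_le_mul_of_nonneg_left hb (norm_nonneg _)
    rw [e1, e2]
    calc (⟪R x, R ((Ts * T) x)⟫).re ≤ ‖R x‖ * (‖Ts * T‖ * ‖R x‖) := le_trans e3 e4
      _ = ‖Ts * T‖ * ‖R x‖ ^ 2 := by ring
  have h9 : (Real.sqrt ‖Ts * T‖ * ‖R x‖) ^ 2 = ‖Ts * T‖ * ‖R x‖ ^ 2 := by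
    rw [mul_pow, Real.sq_sqrt (norm_nonneg _)]
  have h10 : ‖R (T x)‖ ^ 2 ≤ (Real.sqrt ‖Ts * T‖ * ‖R x‖) ^ 2 := by rw [h9]; exact hkey
  have h11 : 0 ≤ Real.sqrt ‖Ts * T‖ * ‖R x‖ := by positivity
  nlinarith [norm_nonneg (R (T x)), h10, h11]

lemma aux_opnormA_nonneg (A T : H →L[ℂ] H) : 0 ≤ opnormA A T :=
  Real.sSup_nonneg (by rintro r ⟨x, hx, rfl⟩; exact Real.sqrt_nonneg _)

lemma aux_wA_nonneg (A T : H →L[ℂ] H) : 0 ≤ wA A T :=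
  Real.sSup_nonneg (by rintro r ⟨x, hx, rfl⟩; exact norm_nonneg _)

lemma aux_opnormA_le {A T : H →L[ℂ] H} {C : ℝ} (hC : 0 ≤ C)
    (h : ∀ x : H, vnormA A x = 1 → vnormA A (T x) ≤ C) : opnormA A T ≤ C :=
  Real.sSup_le (by rintro r ⟨x, hx, rfl⟩; exact h x hx) hC

lemma aux_wA_le {A T : H →L[ℂ] H} {C : ℝ} (hC : 0 ≤ C)
    (h : ∀ x : H, vnormA A x = 1 → ‖innA A (T x) x‖ ≤ C) : wA A T ≤ C :=
  Real.sSup_le (by rintro r ⟨x, hx, rfl⟩; exact h x hx) hC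

lemma aux_vnormA_smul {A R : H →L[ℂ] H} (hR : IsSelfAdjoint R) (hRA : R * R = A)
    (c : ℂ) (x : H) : vnormA A (c • x) = ‖c‖ * vnormA A x := by
  rw [aux_vnormA_R hR hRA, aux_vnormA_R hR hRA, map_smul, norm_smul]

/-- Pointwise bound from the `A`-operator seminorm, for `A`-bounded `T`. -/
lemma aux_le_opnormA {A R T : H →L[ℂ] H} (hR : IsSelfAdjoint R) (hRA : R * R = A)
    {C : ℝ} (hC : 0 ≤ C) (hb : ∀ y : H, ‖R (T y)‖ ≤ C * ‖R y‖) (x : H) :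
    ‖R (T x)‖ ≤ opnormA A T * ‖R x‖ := by
  rcases eq_or_lt_of_le (norm_nonneg (R x)) with h0 | hpos
  · have := hb x
    rw [← h0, mul_zero] at this
    have h1 : ‖R (T x)‖ = 0 := le_antisymm this (norm_nonneg _)
    rw [h1, ← h0, mul_zero]
  · set t : ℂ := (((‖R x‖)⁻¹ : ℝ) : ℂ) with ht
    have htn : ‖t‖ = (‖R x‖)⁻¹ := by
      rw [ht, Complex.norm_real, Real.norm_eq_abs, abs_of_pos (by positivity)]
    have hx1 : vnormA A (t • x) = 1 := by
      rw [aux_vnormA_smul hR hRA, htn, aux_vnormA_R hR hRA, inv_mul_cancel₀ hpos.ne']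
    have hmem : vnormA A (T (t • x)) ∈
        {r : ℝ | ∃ x : H, vnormA A x = 1 ∧ r = vnormA A (T x)} := ⟨t • x, hx1, rfl⟩
    have hbdd : BddAbove {r : ℝ | ∃ x : H, vnormA A x = 1 ∧ r = vnormA A (T x)} := by
      refine ⟨C, ?_⟩
      rintro r ⟨y, hy, rfl⟩
      rw [aux_vnormA_R hR hRA] at hy ⊢
      calc ‖R (T y)‖ ≤ C * ‖R y‖ := hb y
        _ = C := by rw [hy, mul_one]
    have hle := le_csSup hbdd hmem
    have hval : vnormA A (T (t • x)) = (‖R x‖)⁻¹ * ‖R (T x)‖ := by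
      rw [map_smul, aux_vnormA_smul hR hRA, htn, aux_vnormA_R hR hRA]
    rw [hval] at hle
    have := mul_le_mul_of_nonneg_right hle (norm_nonneg (R x))
    rw [mul_comm, ← mul_assoc, mul_inv_cancel₀ hpos.ne', one_mul] at this
    calc ‖R (T x)‖ = ‖R x‖ * ((‖R x‖)⁻¹ * ‖R (T x)‖) := by
          field_simp
      _ ≤ opnormA A T * ‖R x‖ := by
          rw [← mul_assoc, mul_inv_cancel₀ hpos.ne', one_mul]
          exact this

/-- Pointwise bound from the `A`-numerical radius, for `A`-bounded `T`. -/
lemma aux_le_wA {A R T : H →L[ℂ] H} (hR : IsSelfAdjoint R) (hRA : R * R = A)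
    {C : ℝ} (hC : 0 ≤ C) (hb : ∀ y : H, ‖R (T y)‖ ≤ C * ‖R y‖) (x : H) :
    ‖innA A (T x) x‖ ≤ wA A T * ‖R x‖ ^ 2 := by
  have habs : ∀ y : H, ‖innA A (T y) y‖ ≤ C * ‖R y‖ ^ 2 := by
    intro y
    rw [aux_innA_RR hR hRA]
    calc ‖(⟪R (T y), R y⟫ : ℂ)‖ ≤ ‖R (T y)‖ * ‖R y‖ := norm_inner_le_norm _ _
      _ ≤ C * ‖R y‖ * ‖R y‖ := mul_le_mul_of_nonneg_right (hb y) (norm_nonneg _)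
      _ = C * ‖R y‖ ^ 2 := by ring
  rcases eq_or_lt_of_le (norm_nonneg (R x)) with h0 | hpos
  · have := habs x
    rw [← h0] at this
    simp only [ne_eq, OfNat.ofNat_ne_zero, not_false_eq_true, zero_pow, mul_zero] at this
    have h1 : ‖innA A (T x) x‖ = 0 :=
      le_antisymm this (norm_nonneg _)
    rw [h1, ← h0]
    simp
  · set t : ℂ := (((‖R x‖)⁻¹ : ℝ) : ℂ) with ht
    have htn : ‖t‖ = (‖R x‖)⁻¹ := by
      rw [ht, Complex.norm_real, Real.norm_eq_abs, abs_of_pos (by positivity)]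
    have hx1 : vnormA A (t • x) = 1 := by
      rw [aux_vnormA_smul hR hRA, htn, aux_vnormA_R hR hRA, inv_mul_cancel₀ hpos.ne']
    have hbdd : BddAbove {r : ℝ | ∃ x : H, vnormA A x = 1 ∧ r = ‖innA A (T x) x‖} := by
      refine ⟨C, ?_⟩
      rintro r ⟨y, hy, rfl⟩
      rw [aux_vnormA_R hR hRA] at hy
      calc ‖innA A (T y) y‖ ≤ C * ‖R y‖ ^ 2 := habs y
        _ = C := by rw [hy]; ring
    have hmem : ‖innA A (T (t • x)) (t • x)‖ ∈
        {r : ℝ | ∃ x : H, vnormA A x = 1 ∧ r = ‖innA A (T x) x‖} :=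
      ⟨t • x, hx1, rfl⟩
    have hle := le_csSup hbdd hmem
    have hval : ‖innA A (T (t • x)) (t • x)‖
        = (‖R x‖)⁻¹ ^ 2 * ‖innA A (T x) x‖ := by
      rw [map_smul, innA, innA, map_smul, inner_smul_left, inner_smul_right, ← mul_assoc,
        norm_mul, norm_mul]
      have : ‖starRingEnd ℂ t‖ * ‖t‖ = (‖R x‖)⁻¹ ^ 2 := by
        rw [Complex.norm_conj, htn]; ring
      rw [this]
    rw [hval] at hle
    have h2 : 0 < (‖R x‖)⁻¹ ^ 2 := by positivity
    calc ‖innA A (T x) x‖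
        = ‖R x‖ ^ 2 * ((‖R x‖)⁻¹ ^ 2 * ‖innA A (T x) x‖) := by
          field_simp
      _ ≤ ‖R x‖ ^ 2 * wA A T := mul_le_mul_of_nonneg_left hle (by positivity)
      _ = wA A T * ‖R x‖ ^ 2 := by ring

/-- For `A`-selfadjoint `S`, the `A`-operator seminorm is at most the `A`-numerical radius. -/
lemma aux_opnormA_le_wA {A R S : H →L[ℂ] H} (hR : IsSelfAdjoint R) (hRA : R * R = A)
    (hS : A * S = adjoint S * A) : opnormA A S ≤ wA A S := by
  have hA : IsSelfAdjoint A := by rw [← hRA, IsSelfAdjoint, star_mul, hR.star_eq]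
  have hb : ∀ y : H, ‖R (S y)‖ ≤ ‖S‖ * ‖R y‖ := aux_selfadj_bound hR hRA hS
  have hw := aux_le_wA hR hRA (norm_nonneg S) hb
  have hAS : IsSelfAdjoint (A * S) := by
    rw [IsSelfAdjoint, star_mul, hA.star_eq, star_eq_adjoint, hS]
  have hASsymm := (isSelfAdjoint_iff_isSymmetric).mp hAS
  have hphi : ∀ z : H, |(innA A (S z) z).re| ≤ wA A S * ‖R z‖ ^ 2 := fun z =>
    le_trans (Complex.abs_re_le_norm _) (hw z)
  have hsymm : ∀ a b : H, innA A (S b) a = starRingEnd ℂ (innA A (S a) b) := by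
    intro a b
    have h2 := hASsymm b a
    calc innA A (S b) a = ⟪A (S b), a⟫ := rfl
      _ = ⟪b, A (S a)⟫ := h2
      _ = starRingEnd ℂ ⟪A (S a), b⟫ := (inner_conj_symm _ _).symm
  have hpol : ∀ u v : H, (innA A (S (u + v)) (u + v)).re - (innA A (S (u - v)) (u - v)).re
      = 4 * (innA A (S u) v).re := by
    intro u v
    have e1 : innA A (S (u + v)) (u + v)
        = innA A (S u) u + innA A (S u) v + innA A (S v) u + innA A (S v) v := by
      simp only [innA, map_add, inner_add_left, inner_add_right]
      ring
    have e2 : innA A (S (u - v)) (u - v)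
        = innA A (S u) u - innA A (S u) v - innA A (S v) u + innA A (S v) v := by
      simp only [innA, map_sub, inner_sub_left, inner_sub_right]
      ring
    rw [e1, e2, hsymm u v]
    simp only [Complex.add_re, Complex.sub_re, Complex.conj_re]
    ring
  refine aux_opnormA_le (aux_wA_nonneg A S) ?_
  intro x hx1
  rw [aux_vnormA_R hR hRA] at hx1 ⊢
  rcases eq_or_lt_of_le (norm_nonneg (R (S x))) with h0 | hpos
  · rw [← h0]; exact aux_wA_nonneg A S
  set v : H := (((‖R (S x)‖⁻¹ : ℝ) : ℂ)) • (S x) with hv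
  have hvn : ‖R v‖ = 1 := by
    rw [hv, map_smul, norm_smul, Complex.norm_real, Real.norm_eq_abs,
      abs_of_pos (by positivity), inv_mul_cancel₀ hpos.ne']
  have hrebv : (innA A (S x) v).re = ‖R (S x)‖ := by
    rw [innA, hv, inner_smul_right]
    have h5 : (⟪A (S x), S x⟫ : ℂ) = ⟪R (S x), R (S x)⟫ := aux_innA_RR hR hRA _ _
    rw [h5, Complex.re_ofReal_mul, ← RCLike.re_to_complex, inner_self_eq_norm_sq (𝕜 := ℂ),
      sq, ← mul_assoc, inv_mul_cancel₀ hpos.ne', one_mul]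
  have h7 : ‖R (x + v)‖ ^ 2 + ‖R (x - v)‖ ^ 2 = 4 := by
    have hpar := parallelogram_law_with_norm ℂ (R x) (R v)
    rw [map_add, map_sub]
    rw [hx1, hvn] at hpar
    nlinarith [hpar]
  have h6 : 4 * ‖R (S x)‖ ≤ wA A S * ‖R (x + v)‖ ^ 2 + wA A S * ‖R (x - v)‖ ^ 2 := by
    have hp := hphi (x + v)
    have hm := hphi (x - v)
    have hd := hpol x v
    rw [hrebv] at hd
    have h8 := le_abs_self ((innA A (S (x + v)) (x + v)).re)
    have h9 := neg_abs_le ((innA A (S (x - v)) (x - v)).re)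
    linarith
  have hwnn := aux_wA_nonneg A S
  nlinarith [h6, h7]

lemma aux_h2 {A T Ts : H →L[ℂ] H} (hA : IsSelfAdjoint A)
    (h1 : A * Ts = adjoint T * A) : A * T = adjoint Ts * A := by
  have h := congrArg star h1
  simp only [star_mul, hA.star_eq, ← star_eq_adjoint, star_star] at h
  rw [star_eq_adjoint] at h
  exact h.symm

lemma aux_conj_innA {A T Ts : H →L[ℂ] H} (hA : IsSelfAdjoint A)
    (h1 : A * Ts = adjoint T * A) (x : H) :
    innA A (Ts x) x = starRingEnd ℂ (innA A (T x) x) := by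
  have hsymmA := (isSelfAdjoint_iff_isSymmetric).mp hA
  have e1 : A (Ts x) = (adjoint T) (A x) := by
    calc A (Ts x) = (A * Ts) x := rfl
      _ = (adjoint T * A) x := by rw [h1]
      _ = (adjoint T) (A x) := rfl
  calc innA A (Ts x) x = ⟪(adjoint T) (A x), x⟫ := by rw [innA, e1]
    _ = ⟪A x, T x⟫ := adjoint_inner_left T x (A x)
    _ = ⟪x, A (T x)⟫ := hsymmA x (T x)
    _ = starRingEnd ℂ ⟪A (T x), x⟫ := (inner_conj_symm x (A (T x))).symm

lemma aux_innA_ReA {A T Ts : H →L[ℂ] H} (hA : IsSelfAdjoint A)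
    (h1 : A * Ts = adjoint T * A) (x : H) :
    ‖innA A ((ReA T Ts) x) x‖ ≤ ‖innA A (T x) x‖ := by
  have hc := aux_conj_innA hA h1 x
  have e : (ReA T Ts) x = (2:ℂ)⁻¹ • (T x + Ts x) := rfl
  have e2 : innA A ((ReA T Ts) x) x
      = starRingEnd ℂ ((2:ℂ)⁻¹) * (innA A (T x) x + innA A (Ts x) x) := by
    rw [innA, e, map_smul, map_add, inner_smul_left, inner_add_left]
    rfl
  rw [e2, hc, Complex.add_conj]
  rw [norm_mul]
  have h2 : ‖starRingEnd ℂ ((2:ℂ)⁻¹)‖ = 2⁻¹ := by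
    rw [Complex.norm_conj, norm_inv, Complex.norm_ofNat]
  rw [h2]
  have h3 : ‖(((2 * (innA A (T x) x).re : ℝ)) : ℂ)‖
      ≤ 2 * ‖innA A (T x) x‖ := by
    rw [Complex.norm_real, Real.norm_eq_abs, abs_mul]
    have := Complex.abs_re_le_norm (innA A (T x) x)
    rw [show |(2:ℝ)| = 2 from by norm_num]
    linarith
  calc 2⁻¹ * ‖(((2 * (innA A (T x) x).re : ℝ)) : ℂ)‖
      ≤ 2⁻¹ * (2 * ‖innA A (T x) x‖) := by
        exact mul_le_mul_of_nonneg_left h3 (by norm_num)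
    _ = ‖innA A (T x) x‖ := by ring

lemma aux_innA_ImA {A T Ts : H →L[ℂ] H} (hA : IsSelfAdjoint A)
    (h1 : A * Ts = adjoint T * A) (x : H) :
    ‖innA A ((ImA T Ts) x) x‖ ≤ ‖innA A (T x) x‖ := by
  have hc := aux_conj_innA hA h1 x
  have e : (ImA T Ts) x = ((2:ℂ) * Complex.I)⁻¹ • (T x - Ts x) := rfl
  have e2 : innA A ((ImA T Ts) x) x
      = starRingEnd ℂ (((2:ℂ) * Complex.I)⁻¹) * (innA A (T x) x - innA A (Ts x) x) := by
    rw [innA, e, map_smul, map_sub, inner_smul_left, inner_sub_left]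
    rfl
  rw [e2, hc, Complex.sub_conj]
  rw [norm_mul]
  have h4 : ‖starRingEnd ℂ (((2:ℂ) * Complex.I)⁻¹)‖ = 2⁻¹ := by
    rw [Complex.norm_conj, norm_inv, norm_mul, Complex.norm_I, Complex.norm_ofNat]
    norm_num
  rw [h4]
  have h5 : ‖(((2 * (innA A (T x) x).im : ℝ)) : ℂ) * Complex.I‖
      = 2 * |(innA A (T x) x).im| := by
    rw [norm_mul, Complex.norm_I, Complex.norm_real, Real.norm_eq_abs, mul_one, abs_mul]
    norm_num
  rw [h5]
  have h6 := Complex.abs_im_le_norm (innA A (T x) x)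
  linarith

lemma aux_Re_selfadj {A T Ts : H →L[ℂ] H} (hA : IsSelfAdjoint A)
    (h1 : A * Ts = adjoint T * A) :
    A * (ReA T Ts) = adjoint (ReA T Ts) * A := by
  have h2 := aux_h2 hA h1
  have hadj : adjoint (ReA T Ts) = (2:ℂ)⁻¹ • (adjoint T + adjoint Ts) := by
    rw [ReA, ← star_eq_adjoint, star_smul, star_add, star_eq_adjoint, star_eq_adjoint]
    congr 1
    simp
  rw [hadj, ReA, mul_smul_comm, smul_mul_assoc, mul_add, add_mul, h1, h2, add_comm]

lemma aux_Im_selfadj {A T Ts : H →L[ℂ] H} (hA : IsSelfAdjoint A)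
    (h1 : A * Ts = adjoint T * A) :
    A * (ImA T Ts) = adjoint (ImA T Ts) * A := by
  have h2 := aux_h2 hA h1
  have hadj : adjoint (ImA T Ts) = (-((2:ℂ) * Complex.I)⁻¹) • (adjoint T - adjoint Ts) := by
    rw [ImA, ← star_eq_adjoint, star_smul, star_sub, star_eq_adjoint, star_eq_adjoint]
    congr 1
    simp [map_inv₀]
  rw [hadj, ImA, mul_smul_comm, smul_mul_assoc, mul_sub, sub_mul, h1, h2, neg_smul, ← smul_neg]
  congr 1
  abel

lemma aux_Sum_selfadj {A T Ts : H →L[ℂ] H} (hA : IsSelfAdjoint A)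
    (h1 : A * Ts = adjoint T * A) :
    A * (Ts * T + T * Ts) = adjoint (Ts * T + T * Ts) * A := by
  have h2 := aux_h2 hA h1
  have hadj : adjoint (Ts * T + T * Ts) = adjoint T * adjoint Ts + adjoint Ts * adjoint T := by
    rw [← star_eq_adjoint, star_add, star_mul, star_mul, star_eq_adjoint, star_eq_adjoint]
  rw [hadj, mul_add, add_mul, ← mul_assoc, ← mul_assoc, h1, h2]
  rw [mul_assoc, mul_assoc, h1, h2, ← mul_assoc, ← mul_assoc]

lemma aux_iden (T Ts : H →L[ℂ] H) :
    Ts * T + T * Ts = (2:ℂ) • (ReA T Ts * ReA T Ts + ImA T Ts * ImA T Ts) := by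
  rw [ReA, ImA]
  have hI : ((2:ℂ) * Complex.I)⁻¹ * ((2:ℂ) * Complex.I)⁻¹ = -(4:ℂ)⁻¹ := by
    rw [← mul_inv]
    rw [show ((2:ℂ) * Complex.I) * ((2:ℂ) * Complex.I) = -4 by
      rw [mul_mul_mul_comm, Complex.I_mul_I]; norm_num]
    rw [inv_neg]
  rw [smul_mul_smul_comm, smul_mul_smul_comm, hI]
  rw [show (2:ℂ)⁻¹ * 2⁻¹ = 4⁻¹ by norm_num]
  rw [mul_add, add_mul, add_mul, mul_sub, sub_mul, sub_mul, smul_add, smul_smul, smul_smul]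
  rw [show (2:ℂ) * 4⁻¹ = 2⁻¹ by norm_num, show (2:ℂ) * -4⁻¹ = -2⁻¹ by norm_num]
  module

theorem stmt5 (A T Ts : H →L[ℂ] H) (hA : A.IsPositive) (hTs : IsAAdjoint A T Ts) :
    wA A T ≥ Real.sqrt ((1 / 4) * opnormA A (Ts.comp T + T.comp Ts) +
      (1 / 2) * |opnormA A (ReA T Ts) ^ 2 - opnormA A (ImA T Ts) ^ 2|) := by
  have hA0 : (0 : H →L[ℂ] H) ≤ A := (ContinuousLinearMap.nonneg_iff_isPositive A).mpr hA
  set R : H →L[ℂ] H := CFC.sqrt A with hRdef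
  have hRsa : IsSelfAdjoint R := IsSelfAdjoint.of_nonneg (CFC.sqrt_nonneg A)
  have hRA : R * R = A := CFC.sqrt_mul_sqrt_self A hA0
  have hAsa : IsSelfAdjoint A := hA.isSelfAdjoint
  have h1 : A * Ts = adjoint T * A := hTs
  have h2 : A * T = adjoint Ts * A := aux_h2 hAsa h1
  -- A-boundedness of T
  have hbT : ∀ y : H, ‖R (T y)‖ ≤ Real.sqrt ‖Ts * T‖ * ‖R y‖ := aux_T_bound hRsa hRA hAsa h1
  set r : ℝ := opnormA A (ReA T Ts) with hrdef
  set i : ℝ := opnormA A (ImA T Ts) with hidef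
  set w : ℝ := wA A T with hwdef
  have hwnn : 0 ≤ w := aux_wA_nonneg A T
  have hrnn : 0 ≤ r := aux_opnormA_nonneg A (ReA T Ts)
  have hinn : 0 ≤ i := aux_opnormA_nonneg A (ImA T Ts)
  have hRe := aux_Re_selfadj hAsa h1
  have hIm := aux_Im_selfadj hAsa h1
  have hSum := aux_Sum_selfadj hAsa h1
  -- pointwise numerical radius bound for T
  have hptw : ∀ x : H, ‖innA A (T x) x‖ ≤ w * ‖R x‖ ^ 2 :=
    aux_le_wA hRsa hRA (Real.sqrt_nonneg _) hbT
  -- r ≤ w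
  have hr_le_w : r ≤ w := by
    refine le_trans (aux_opnormA_le_wA hRsa hRA hRe) ?_
    refine aux_wA_le hwnn ?_
    intro x hx
    have hx' : ‖R x‖ = 1 := by rwa [aux_vnormA_R hRsa hRA] at hx
    calc ‖innA A ((ReA T Ts) x) x‖ ≤ ‖innA A (T x) x‖ :=
          aux_innA_ReA hAsa h1 x
      _ ≤ w * ‖R x‖ ^ 2 := hptw x
      _ = w := by rw [hx']; ring
  have hi_le_w : i ≤ w := by
    refine le_trans (aux_opnormA_le_wA hRsa hRA hIm) ?_
    refine aux_wA_le hwnn ?_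
    intro x hx
    have hx' : ‖R x‖ = 1 := by rwa [aux_vnormA_R hRsa hRA] at hx
    calc ‖innA A ((ImA T Ts) x) x‖ ≤ ‖innA A (T x) x‖ :=
          aux_innA_ImA hAsa h1 x
      _ ≤ w * ‖R x‖ ^ 2 := hptw x
      _ = w := by rw [hx']; ring
  -- pointwise operator seminorm bounds for ReA and ImA
  have hbRe : ∀ y : H, ‖R ((ReA T Ts) y)‖ ≤ r * ‖R y‖ :=
    aux_le_opnormA hRsa hRA (norm_nonneg (ReA T Ts)) (aux_selfadj_bound hRsa hRA hRe)
  have hbIm : ∀ y : H, ‖R ((ImA T Ts) y)‖ ≤ i * ‖R y‖ :=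
    aux_le_opnormA hRsa hRA (norm_nonneg (ImA T Ts)) (aux_selfadj_bound hRsa hRA hIm)
  -- bound on the opnorm of Ts T + T Ts
  have hN : opnormA A (Ts.comp T + T.comp Ts) ≤ 2 * (r ^ 2 + i ^ 2) := by
    have hcomp : Ts.comp T + T.comp Ts = Ts * T + T * Ts := rfl
    rw [hcomp]
    refine aux_opnormA_le (by positivity) ?_
    intro x hx
    have hx' : ‖R x‖ = 1 := by rwa [aux_vnormA_R hRsa hRA] at hx
    rw [aux_vnormA_R hRsa hRA]
    have e : (Ts * T + T * Ts) x
        = (2:ℂ) • ((ReA T Ts) ((ReA T Ts) x) + (ImA T Ts) ((ImA T Ts) x)) := by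
      have h := congrArg (fun f : H →L[ℂ] H => f x) (aux_iden T Ts)
      simpa [ContinuousLinearMap.mul_apply] using h
    rw [e, map_smul, norm_smul]
    have h2n : ‖(2:ℂ)‖ = 2 := by simp
    rw [h2n, map_add]
    calc 2 * ‖R ((ReA T Ts) ((ReA T Ts) x)) + R ((ImA T Ts) ((ImA T Ts) x))‖
        ≤ 2 * (‖R ((ReA T Ts) ((ReA T Ts) x))‖ + ‖R ((ImA T Ts) ((ImA T Ts) x))‖) := by
          have := norm_add_le (R ((ReA T Ts) ((ReA T Ts) x))) (R ((ImA T Ts) ((ImA T Ts) x)))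
          linarith
      _ ≤ 2 * (r * (r * ‖R x‖) + i * (i * ‖R x‖)) := by
          have ha := hbRe ((ReA T Ts) x)
          have hb := hbIm ((ImA T Ts) x)
          have ha2 : ‖R ((ReA T Ts) ((ReA T Ts) x))‖ ≤ r * (r * ‖R x‖) :=
            le_trans ha (mul_le_mul_of_nonneg_left (hbRe x) hrnn)
          have hb2 : ‖R ((ImA T Ts) ((ImA T Ts) x))‖ ≤ i * (i * ‖R x‖) :=
            le_trans hb (mul_le_mul_of_nonneg_left (hbIm x) hinn)
          linarith
      _ = 2 * (r ^ 2 + i ^ 2) := by rw [hx']; ring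
  -- final arithmetic
  have hkey : (1 / 4) * opnormA A (Ts.comp T + T.comp Ts) + (1 / 2) * |r ^ 2 - i ^ 2|
      ≤ w ^ 2 := by
    have hr2 : r ^ 2 ≤ w ^ 2 := by nlinarith
    have hi2 : i ^ 2 ≤ w ^ 2 := by nlinarith
    rcases abs_cases (r ^ 2 - i ^ 2) with ⟨he, _⟩ | ⟨he, _⟩ <;> rw [he] <;> nlinarith
  rw [ge_iff_le]
  calc Real.sqrt ((1 / 4) * opnormA A (Ts.comp T + T.comp Ts) + (1 / 2) * |r ^ 2 - i ^ 2|)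
      ≤ Real.sqrt (w ^ 2) := Real.sqrt_le_sqrt hkey
    _ = w := Real.sqrt_sq hwnn
end
end
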